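/- arXiv:0810.0392 — 4 statements merged into one kernel-verified Lean document; each statement's English description precedes it below -/
import Mathlib

section
/- Consider the discrete-time exclusion-voter chain with parameters (β,p). (i) The ground-state configuration 𝒟₀ is an absorbing state under Pr_{β,1} for every β ∈ [0,1]. (ii) If β ≠ 1 and (β,p) ∉ {(0,0),(0,1)}, then all states in 𝒟∖{𝒟₀} communicate under Pr_{β,p}. (iii) If β ≠ 1, p < 1 and (β,p) ≠ (0,0), then all states in 𝒟 communicate under Pr_{β,p} and the chain ξ is irreducible and aperiodic. -/
open MeasureTheory Filter
open scoped ENNReal NNReal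

namespace EV

/-- A configuration of the exclusion-voter model is the finite hybrid-zone word
(`false` = 0, `true` = 1); the full two-sided configuration is `1^∞ w 0^∞`. -/
abbrev Word := List Bool

/-- Canonical (normalized) words: empty (the ground state `𝒟₀`) or starting with
a `0` and ending with a `1`; these are in bijection with the configuration space `𝒟`. -/
def IsConfig (w : Word) : Prop :=
  w = [] ∨ (w.head? = some false ∧ w.getLast? = some true)

/-- The ground-state Heaviside configuration `𝒟₀ = …111000…`. -/
def groundState : Word := []

/-- Pad a word with one boundary symbol of the adjacent infinite block on each side. -/
def pad (w : Word) : Word := true :: (w ++ [false])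

/-- Normalize: strip leading `1`s (they merge into the left infinite block of `1`s)
and trailing `0`s (they merge into the right infinite block of `0`s). -/
def strip (w : Word) : Word :=
  ((w.dropWhile (· = true)).reverse.dropWhile (· = false)).reverse

def setPair (w : Word) (i : ℕ) (a b : Bool) : Word := (w.set i a).set (i + 1) b

def swapPair (w : Word) (i : ℕ) : Word :=
  setPair w i (w.getD (i + 1) true) (w.getD i true)

/-- Indices of the unlike adjacent pairs (`01` or `10`), read off the padded word. -/
def unlike (w : Word) : List ℕ :=
  (List.range (w.length + 1)).filter
    (fun i => (pad w).getD i true ≠ (pad w).getD (i + 1) true)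

/-- One-step transition kernel of the discrete-time exclusion-voter chain with mixing
parameter `β` and exclusion parameter `p`: an unlike adjacent pair is chosen uniformly
at random; with probability `β` a voter move flips the pair to `00` or `11` (each with
probability `1/2`); with probability `1-β` an exclusion move swaps a `01` with
probability `p` and a `10` with probability `1-p` (otherwise no change). -/
noncomputable def P (β p : ℝ) (w w' : Word) : ℝ :=
  ((unlike w).map (fun i =>
    let a := (pad w).getD i true
    let swapProb := if a then 1 - p else p
    ((unlike w).length : ℝ)⁻¹ *
      (β * (1 / 2) * (if strip (setPair (pad w) i false false) = w' then 1 else 0)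
       + β * (1 / 2) * (if strip (setPair (pad w) i true true) = w' then 1 else 0)
       + (1 - β) * swapProb * (if strip (swapPair (pad w) i) = w' then 1 else 0)
       + (1 - β) * (1 - swapProb) * (if w = w' then 1 else 0)))).sum

/-- `n`-step transition probabilities. -/
noncomputable def Pn (β p : ℝ) : ℕ → Word → Word → ℝ
  | 0 => fun w w' => if w = w' then 1 else 0
  | n + 1 => fun w w' => ∑' z : Word, Pn β p n w z * P β p z w'

/-- `w'` is accessible from `w`: some `n`-step transition probability is positive. -/
def Accessible (β p : ℝ) (w w' : Word) : Prop :=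
  ∃ n : ℕ, 0 < n ∧ 0 < Pn β p n w w'

/-- Two states communicate: each is accessible from the other. -/
def Communicate (β p : ℝ) (w w' : Word) : Prop :=
  Accessible β p w w' ∧ Accessible β p w' w

instance : MeasurableSpace Word := ⊤

/-- `ξ` is (a realization of) the discrete-time exclusion-voter Markov chain with
parameters `(β, p)` under the probability measure `μ`. -/
def IsEVChain (β p : ℝ) {Ω : Type*} [MeasurableSpace Ω] (μ : Measure Ω)
    (ξ : ℕ → Ω → Word) : Prop :=
  (∀ t, Measurable (ξ t)) ∧
  ∀ (t : ℕ) (path : ℕ → Word),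
    μ {ω | ∀ i ≤ t + 1, ξ i ω = path i}
      = μ {ω | ∀ i ≤ t, ξ i ω = path i} * ENNReal.ofReal (P β p (path t) (path (t + 1)))

/-- The relaxation time `τ = min {t ∈ ℕ, t ≥ 1 : ξ_t = 𝒟₀}` (`∞` if there is no such `t`). -/
noncomputable def relaxTime {Ω : Type*} (ξ : ℕ → Ω → Word) (ω : Ω) : ℝ≥0∞ :=
  sInf {r : ℝ≥0∞ | ∃ t : ℕ, 0 < t ∧ ξ t ω = groundState ∧ r = (t : ℝ≥0∞)}

/-- The size `|S|` of the hybrid zone. -/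
def hz (w : Word) : ℕ := w.length

/-- The number of blocks `N(S)`: the number of (finite) `1`-blocks of the hybrid zone. -/
def nb (w : Word) : ℕ :=
  ((Finset.range w.length).filter
    (fun b => w.getD b false = true ∧ (b = 0 ∨ w.getD (b - 1) true = false))).card

/-- Number of `0`s among the first `c` positions of the hybrid zone. -/
def z0 (w : Word) (c : ℕ) : ℕ :=
  ((Finset.range c).filter (fun a => w.getD a true = false)).card

/-- Number of `1`s of the hybrid zone at positions `≥ c`. -/
def o1 (w : Word) (c : ℕ) : ℕ :=
  ((Finset.Ico c w.length).filter (fun b => w.getD b false = true)).card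

/-- `f₁(S) = Σᵢ mᵢ Rᵢ = Σᵢ nᵢ Tᵢ`: each `1` contributes the number of `0`s to its left. -/
def f1 (w : Word) : ℕ :=
  ∑ b ∈ (Finset.range w.length).filter (fun b => w.getD b false = true), z0 w b

/-- `f₂(S) = (1/2)(Σᵢ mᵢ Rᵢ² + Σᵢ nᵢ Tᵢ²)`: each `1` contributes the squared number of
`0`s to its left, each `0` the squared number of `1`s to its right. -/
noncomputable def f2 (w : Word) : ℝ :=
  (1 / 2) *
    ((∑ b ∈ (Finset.range w.length).filter (fun b => w.getD b false = true),
        ((z0 w b : ℝ)) ^ 2)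
     + (∑ a ∈ (Finset.range w.length).filter (fun a => w.getD a true = false),
        ((o1 w (a + 1) : ℝ)) ^ 2))

/-- `g(S) = max_{1 ≤ k ≤ N} R_k T_k`: the maximum over the `01`-corners of
(number of `0`s up to the corner) × (number of `1`s after the corner). -/
def gfun (w : Word) : ℕ :=
  ((Finset.range w.length).filter
    (fun a => w.getD a true = false ∧ w.getD (a + 1) false = true)).sup
    (fun a => z0 w (a + 1) * o1 w (a + 1))

/-- `φ₁(S) = Σᵢ Σ_{j=R_{i-1}+1}^{R_i} Σ_{k=1}^{T_i} 1/(j+k)`: the `j`-th `0` (at position `a`,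
so `j = z0 w (a+1)`) contributes `Σ_{k=1}^{T} 1/(j+k)` with `T` the number of `1`s to its right. -/
noncomputable def phi1 (w : Word) : ℝ :=
  ∑ a ∈ (Finset.range w.length).filter (fun a => w.getD a true = false),
    ∑ k ∈ Finset.Icc 1 (o1 w (a + 1)), (1 : ℝ) / ((z0 w (a + 1) : ℝ) + (k : ℝ))


/-! ### Auxiliary lemmas about `strip` -/

def Norm (w : Word) : Prop := w.head? = some false ∧ w.getLast? = some true

lemma strip_nil : strip ([] : Word) = [] := rfl

lemma strip_cons_true (w : Word) : strip (true :: w) = strip w := by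
  simp [strip, List.dropWhile_cons]

lemma strip_append_false (w : Word) : strip (w ++ [false]) = strip w := by
  unfold strip
  rw [List.dropWhile_append]
  by_cases h : (List.dropWhile (· = true) w).isEmpty
  · rw [if_pos h]
    rw [List.isEmpty_iff] at h
    rw [h]
    simp [List.dropWhile_cons]
  · rw [if_neg h]
    simp [List.dropWhile_cons]

lemma strip_norm {w : Word} (hw : Norm w) : strip w = w := by
  obtain ⟨h1, h2⟩ := hw
  obtain ⟨t, rfl⟩ : ∃ t, w = false :: t := by
    cases w with
    | nil => simp at h1
    | cons a t =>
      simp only [List.head?_cons, Option.some.injEq] at h1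
      exact ⟨t, by rw [h1]⟩
  have hrev : (false :: t).reverse.head? = some true := by
    rw [List.head?_reverse]; exact h2
  obtain ⟨r, hr⟩ : ∃ r, (false :: t).reverse = true :: r := by
    cases h : (false :: t).reverse with
    | nil => rw [h] at hrev; simp at hrev
    | cons a r =>
      rw [h] at hrev
      simp only [List.head?_cons, Option.some.injEq] at hrev
      exact ⟨r, by rw [hrev]⟩
  unfold strip
  rw [show List.dropWhile (· = true) (false :: t) = false :: t by
    simp [List.dropWhile_cons]]
  rw [hr]
  rw [show List.dropWhile (· = false) (true :: r) = true :: r by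
    simp [List.dropWhile_cons]]
  rw [← hr, List.reverse_reverse]

/-! ### List surgery lemmas -/

lemma set_append_len (l₁ l₂ : Word) (c a : Bool) :
    (l₁ ++ c :: l₂).set l₁.length a = l₁ ++ a :: l₂ := by
  induction l₁ with
  | nil => rfl
  | cons x xs ih => simpa using ih

lemma getD_append_len (l₁ l₂ : Word) (c d : Bool) :
    (l₁ ++ c :: l₂).getD l₁.length d = c := by
  induction l₁ with
  | nil => rfl
  | cons x xs ih => simpa using ih

lemma getD_append_len_succ (l₁ l₂ : Word) (c d e : Bool) :
    (l₁ ++ c :: d :: l₂).getD (l₁.length + 1) e = d := by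
  have : l₁ ++ c :: d :: l₂ = (l₁ ++ [c]) ++ d :: l₂ := by simp
  rw [this, show l₁.length + 1 = (l₁ ++ [c]).length by simp]
  exact getD_append_len _ _ _ _

lemma setPair_append (T R : Word) (c d a b : Bool) :
    setPair (T ++ c :: d :: R) T.length a b = T ++ a :: b :: R := by
  unfold setPair
  rw [set_append_len]
  rw [show T ++ a :: d :: R = (T ++ [a]) ++ d :: R by simp,
      show T.length + 1 = (T ++ [a]).length by simp, set_append_len]
  simp

lemma swapPair_append (T R : Word) (c d : Bool) :
    swapPair (T ++ c :: d :: R) T.length = T ++ d :: c :: R := by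
  unfold swapPair
  rw [getD_append_len, getD_append_len_succ, setPair_append]

lemma mem_unlike_of_pad {w T R : Word} {c d : Bool}
    (hpad : pad w = T ++ c :: d :: R) (hcd : c ≠ d) :
    T.length ∈ unlike w := by
  have hlen : w.length + 2 = T.length + (R.length + 2) := by
    have := congrArg List.length hpad
    simpa [pad] using this
  refine List.mem_filter.2 ⟨List.mem_range.2 (by omega), ?_⟩
  have h1 : (pad w).getD T.length true = c := by rw [hpad, getD_append_len]
  have h2 : (pad w).getD (T.length + 1) true = d := by rw [hpad, getD_append_len_succ]
  simp only [ne_eq, decide_eq_true_eq]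
  rw [h1, h2]
  simp [hcd]
/-! ### Positivity of the transition kernel -/

lemma ite_one_zero_nonneg (c : Prop) [Decidable c] : (0:ℝ) ≤ if c then 1 else 0 := by
  split <;> norm_num

lemma Pterm_nonneg {β p : ℝ} (hβ0 : 0 ≤ β) (hβ1 : β ≤ 1) (hp0 : 0 ≤ p) (hp1 : p ≤ 1)
    (w w' : Word) (j : ℕ) :
    (0:ℝ) ≤ ((unlike w).length : ℝ)⁻¹ *
      (β * (1 / 2) * (if strip (setPair (pad w) j false false) = w' then 1 else 0)
       + β * (1 / 2) * (if strip (setPair (pad w) j true true) = w' then 1 else 0)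
       + (1 - β) * (if (pad w).getD j true then 1 - p else p) *
           (if strip (swapPair (pad w) j) = w' then 1 else 0)
       + (1 - β) * (1 - (if (pad w).getD j true then 1 - p else p)) *
           (if w = w' then 1 else 0)) := by
  have hsp0 : (0:ℝ) ≤ (if (pad w).getD j true then 1 - p else p) := by
    split <;> linarith
  have hsp1 : (if (pad w).getD j true then 1 - p else p) ≤ 1 := by
    split <;> linarith
  have l0 : (0:ℝ) ≤ ((unlike w).length : ℝ)⁻¹ := by positivity
  refine mul_nonneg l0 ?_
  have a1 : (0:ℝ) ≤ β * (1 / 2) * (if strip (setPair (pad w) j false false) = w' then 1 else 0) :=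
    mul_nonneg (by linarith) (ite_one_zero_nonneg _)
  have a2 : (0:ℝ) ≤ β * (1 / 2) * (if strip (setPair (pad w) j true true) = w' then 1 else 0) :=
    mul_nonneg (by linarith) (ite_one_zero_nonneg _)
  have a3 : (0:ℝ) ≤ (1 - β) * (if (pad w).getD j true then 1 - p else p) *
      (if strip (swapPair (pad w) j) = w' then 1 else 0) :=
    mul_nonneg (mul_nonneg (by linarith) hsp0) (ite_one_zero_nonneg _)
  have a4 : (0:ℝ) ≤ (1 - β) * (1 - (if (pad w).getD j true then 1 - p else p)) *
      (if w = w' then 1 else 0) :=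
    mul_nonneg (mul_nonneg (by linarith) (by linarith)) (ite_one_zero_nonneg _)
  linarith

lemma P_nonneg {β p : ℝ} (hβ0 : 0 ≤ β) (hβ1 : β ≤ 1) (hp0 : 0 ≤ p) (hp1 : p ≤ 1)
    (w w' : Word) : 0 ≤ P β p w w' := by
  unfold P
  refine List.sum_nonneg ?_
  intro r hr
  simp only [List.mem_map] at hr
  obtain ⟨j, hj, rfl⟩ := hr
  exact Pterm_nonneg hβ0 hβ1 hp0 hp1 w w' j

lemma P_ge_term {β p : ℝ} (hβ0 : 0 ≤ β) (hβ1 : β ≤ 1) (hp0 : 0 ≤ p) (hp1 : p ≤ 1)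
    {w w' : Word} {i : ℕ} (hi : i ∈ unlike w) :
    ((unlike w).length : ℝ)⁻¹ *
      (β * (1 / 2) * (if strip (setPair (pad w) i false false) = w' then 1 else 0)
       + β * (1 / 2) * (if strip (setPair (pad w) i true true) = w' then 1 else 0)
       + (1 - β) * (if (pad w).getD i true then 1 - p else p) *
           (if strip (swapPair (pad w) i) = w' then 1 else 0)
       + (1 - β) * (1 - (if (pad w).getD i true then 1 - p else p)) *
           (if w = w' then 1 else 0)) ≤ P β p w w' := by
  unfold P
  refine List.single_le_sum ?_ _ (List.mem_map_of_mem hi)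
  intro r hr
  simp only [List.mem_map] at hr
  obtain ⟨j, hj, rfl⟩ := hr
  exact Pterm_nonneg hβ0 hβ1 hp0 hp1 w w' j

lemma unlike_inv_pos {w : Word} {i : ℕ} (hi : i ∈ unlike w) :
    (0:ℝ) < ((unlike w).length : ℝ)⁻¹ := by
  have h : 0 < (unlike w).length := List.length_pos_iff.2 (List.ne_nil_of_mem hi)
  have : (0:ℝ) < ((unlike w).length : ℝ) := by exact_mod_cast h
  positivity

lemma voter_pos {β p : ℝ} (hβ : 0 < β) (hβ1 : β ≤ 1) (hp0 : 0 ≤ p) (hp1 : p ≤ 1)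
    {w w' T R : Word} {c d : Bool} (b : Bool)
    (hpad : pad w = T ++ c :: d :: R) (hcd : c ≠ d)
    (hw' : strip (T ++ b :: b :: R) = w') : 0 < P β p w w' := by
  have hi := mem_unlike_of_pad hpad hcd
  have hset : strip (setPair (pad w) T.length b b) = w' := by
    rw [hpad, setPair_append]; exact hw'
  refine lt_of_lt_of_le ?_ (P_ge_term hβ.le hβ1 hp0 hp1 hi)
  have hL := unlike_inv_pos hi
  have hsp0 : (0:ℝ) ≤ (if (pad w).getD T.length true then 1 - p else p) := by
    split <;> linarith
  have hsp1 : (if (pad w).getD T.length true then 1 - p else p) ≤ 1 := by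
    split <;> linarith
  have a3 : (0:ℝ) ≤ (1 - β) * (if (pad w).getD T.length true then 1 - p else p) *
      (if strip (swapPair (pad w) T.length) = w' then 1 else 0) :=
    mul_nonneg (mul_nonneg (by linarith) hsp0) (ite_one_zero_nonneg _)
  have a4 : (0:ℝ) ≤ (1 - β) * (1 - (if (pad w).getD T.length true then 1 - p else p)) *
      (if w = w' then 1 else 0) :=
    mul_nonneg (mul_nonneg (by linarith) (by linarith)) (ite_one_zero_nonneg _)
  cases b
  · rw [if_pos hset]
    have a2 : (0:ℝ) ≤ β * (1 / 2) *
        (if strip (setPair (pad w) T.length true true) = w' then 1 else 0) :=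
      mul_nonneg (by linarith) (ite_one_zero_nonneg _)
    refine mul_pos hL (by nlinarith)
  · rw [if_pos hset]
    have a1 : (0:ℝ) ≤ β * (1 / 2) *
        (if strip (setPair (pad w) T.length false false) = w' then 1 else 0) :=
      mul_nonneg (by linarith) (ite_one_zero_nonneg _)
    refine mul_pos hL (by nlinarith)

lemma swap_pos {β p : ℝ} (hβ0 : 0 ≤ β) (hβ1 : β ≤ 1) (hp0 : 0 ≤ p) (hp1 : p ≤ 1)
    {w w' T R : Word} {c d : Bool}
    (hpad : pad w = T ++ c :: d :: R) (hcd : c ≠ d)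
    (hc : 0 < (1 - β) * (if c then 1 - p else p))
    (hw' : strip (T ++ d :: c :: R) = w') : 0 < P β p w w' := by
  have hi := mem_unlike_of_pad hpad hcd
  have hgd : (pad w).getD T.length true = c := by rw [hpad, getD_append_len]
  have hset : strip (swapPair (pad w) T.length) = w' := by
    rw [hpad, swapPair_append]; exact hw'
  refine lt_of_lt_of_le ?_ (P_ge_term hβ0 hβ1 hp0 hp1 hi)
  have hL := unlike_inv_pos hi
  rw [hgd, if_pos hset]
  have a1 : (0:ℝ) ≤ β * (1 / 2) *
      (if strip (setPair (pad w) T.length false false) = w' then 1 else 0) :=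
    mul_nonneg (by linarith) (ite_one_zero_nonneg _)
  have a2 : (0:ℝ) ≤ β * (1 / 2) *
      (if strip (setPair (pad w) T.length true true) = w' then 1 else 0) :=
    mul_nonneg (by linarith) (ite_one_zero_nonneg _)
  have hsp0 : (0:ℝ) ≤ (if c then 1 - p else p) := by
    cases c <;> simp <;> linarith
  have hsp1 : (if c then 1 - p else p) ≤ 1 := by
    cases c <;> simp <;> linarith
  have a4 : (0:ℝ) ≤ (1 - β) * (1 - (if c then 1 - p else p)) * (if w = w' then 1 else 0) :=
    mul_nonneg (mul_nonneg (by linarith) (by linarith)) (ite_one_zero_nonneg _)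
  refine mul_pos hL (by nlinarith)

lemma stay_pos {β p : ℝ} (hβ0 : 0 ≤ β) (hβ1 : β ≤ 1) (hp0 : 0 ≤ p) (hp1 : p ≤ 1)
    {w T R : Word} {c d : Bool}
    (hpad : pad w = T ++ c :: d :: R) (hcd : c ≠ d)
    (hc : 0 < (1 - β) * (1 - (if c then 1 - p else p))) : 0 < P β p w w := by
  have hi := mem_unlike_of_pad hpad hcd
  have hgd : (pad w).getD T.length true = c := by rw [hpad, getD_append_len]
  refine lt_of_lt_of_le ?_ (P_ge_term hβ0 hβ1 hp0 hp1 hi)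
  have hL := unlike_inv_pos hi
  rw [hgd, if_pos rfl]
  have a1 : (0:ℝ) ≤ β * (1 / 2) *
      (if strip (setPair (pad w) T.length false false) = w then 1 else 0) :=
    mul_nonneg (by linarith) (ite_one_zero_nonneg _)
  have a2 : (0:ℝ) ≤ β * (1 / 2) *
      (if strip (setPair (pad w) T.length true true) = w then 1 else 0) :=
    mul_nonneg (by linarith) (ite_one_zero_nonneg _)
  have hsp0 : (0:ℝ) ≤ (if c then 1 - p else p) := by
    cases c <;> simp <;> linarith
  have a3 : (0:ℝ) ≤ (1 - β) * (if c then 1 - p else p) *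
      (if strip (swapPair (pad w) T.length) = w then 1 else 0) :=
    mul_nonneg (mul_nonneg (by linarith) hsp0) (ite_one_zero_nonneg _)
  refine mul_pos hL (by nlinarith)
/-! ### Multi-step machinery -/

lemma P_support_subset {β p : ℝ} (z w' : Word) (hne : P β p z w' ≠ 0) :
    w' ∈ ((unlike z).map (fun i => strip (setPair (pad z) i false false)) ++
       (unlike z).map (fun i => strip (setPair (pad z) i true true)) ++
       (unlike z).map (fun i => strip (swapPair (pad z) i)) ++ [z]) := by
  unfold P at hne
  obtain ⟨r, hr, hrne⟩ : ∃ r ∈ (unlike z).map (fun i =>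
      let a := (pad z).getD i true
      let swapProb := if a then 1 - p else p
      ((unlike z).length : ℝ)⁻¹ *
        (β * (1 / 2) * (if strip (setPair (pad z) i false false) = w' then 1 else 0)
         + β * (1 / 2) * (if strip (setPair (pad z) i true true) = w' then 1 else 0)
         + (1 - β) * swapProb * (if strip (swapPair (pad z) i) = w' then 1 else 0)
         + (1 - β) * (1 - swapProb) * (if z = w' then 1 else 0))), r ≠ 0 := by
    by_contra h
    push_neg at h
    exact hne (List.sum_eq_zero h)
  simp only [List.mem_map] at hr
  obtain ⟨j, hj, hjr⟩ := hr
  rw [← hjr] at hrne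
  have hexp : ((unlike z).length : ℝ)⁻¹ *
      (β * (1 / 2) * (if strip (setPair (pad z) j false false) = w' then 1 else 0)
       + β * (1 / 2) * (if strip (setPair (pad z) j true true) = w' then 1 else 0)
       + (1 - β) * (if (pad z).getD j true then 1 - p else p) *
           (if strip (swapPair (pad z) j) = w' then 1 else 0)
       + (1 - β) * (1 - (if (pad z).getD j true then 1 - p else p)) *
           (if z = w' then 1 else 0)) ≠ 0 := hrne
  simp only [List.mem_append, List.mem_map, List.mem_singleton]
  by_cases h1 : strip (setPair (pad z) j false false) = w'
  · exact Or.inl (Or.inl (Or.inl ⟨j, hj, h1⟩))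
  by_cases h2 : strip (setPair (pad z) j true true) = w'
  · exact Or.inl (Or.inl (Or.inr ⟨j, hj, h2⟩))
  by_cases h3 : strip (swapPair (pad z) j) = w'
  · exact Or.inl (Or.inr ⟨j, hj, h3⟩)
  by_cases h4 : z = w'
  · exact Or.inr h4.symm
  rw [if_neg h1, if_neg h2, if_neg h3, if_neg h4] at hexp
  simp at hexp

lemma Pn_zero {β p : ℝ} (w w' : Word) : Pn β p 0 w w' = if w = w' then 1 else 0 := rfl

lemma Pn_succ {β p : ℝ} (n : ℕ) (w w' : Word) :
    Pn β p (n + 1) w w' = ∑' z : Word, Pn β p n w z * P β p z w' := rfl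

lemma Pn_nonneg {β p : ℝ} (hβ0 : 0 ≤ β) (hβ1 : β ≤ 1) (hp0 : 0 ≤ p) (hp1 : p ≤ 1) :
    ∀ (n : ℕ) (w w' : Word), 0 ≤ Pn β p n w w' := by
  intro n
  induction n with
  | zero => intro w w'; rw [Pn_zero]; split <;> norm_num
  | succ n ih =>
    intro w w'
    rw [Pn_succ]
    exact tsum_nonneg fun z => mul_nonneg (ih w z) (P_nonneg hβ0 hβ1 hp0 hp1 z w')

lemma Pn_support_finite {β p : ℝ} :
    ∀ (n : ℕ) (w : Word), {w' | Pn β p n w w' ≠ 0}.Finite := by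
  intro n
  induction n with
  | zero =>
    intro w
    refine Set.Finite.subset (Set.finite_singleton w) ?_
    intro w' hw'
    simp only [Set.mem_setOf_eq, Pn_zero] at hw'
    by_contra h
    rw [if_neg (by simpa [eq_comm] using h)] at hw'
    exact hw' rfl
  | succ n ih =>
    intro w
    refine Set.Finite.subset ((ih w).biUnion
      (fun z _ => (((unlike z).map (fun i => strip (setPair (pad z) i false false)) ++
       (unlike z).map (fun i => strip (setPair (pad z) i true true)) ++
       (unlike z).map (fun i => strip (swapPair (pad z) i)) ++ [z]).finite_toSet))) ?_
    intro w' hw'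
    simp only [Set.mem_setOf_eq, Pn_succ] at hw'
    have : ∃ z, Pn β p n w z * P β p z w' ≠ 0 := by
      by_contra h
      push_neg at h
      exact hw' (by rw [show (fun z => Pn β p n w z * P β p z w') = fun _ => (0:ℝ)
        from funext h, tsum_zero])
    obtain ⟨z, hz⟩ := this
    have h1 : Pn β p n w z ≠ 0 := fun h => hz (by rw [h, zero_mul])
    have h2 : P β p z w' ≠ 0 := fun h => hz (by rw [h, mul_zero])
    exact Set.mem_biUnion h1 (P_support_subset z w' h2)

lemma Pn_succ_pos {β p : ℝ} (hβ0 : 0 ≤ β) (hβ1 : β ≤ 1) (hp0 : 0 ≤ p) (hp1 : p ≤ 1)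
    {n : ℕ} {w z w' : Word} (h1 : 0 < Pn β p n w z) (h2 : 0 < P β p z w') :
    0 < Pn β p (n + 1) w w' := by
  have hsum : Summable (fun y => Pn β p n w y * P β p y w') := by
    refine summable_of_ne_finset_zero (s := (Pn_support_finite (β := β) (p := p) n w).toFinset) ?_
    intro y hy
    have : Pn β p n w y = 0 := by
      by_contra h
      exact hy ((Pn_support_finite (β := β) (p := p) n w).mem_toFinset.2 h)
    rw [this, zero_mul]
  have hle := Summable.le_tsum hsum z (fun y _ =>
    mul_nonneg (Pn_nonneg hβ0 hβ1 hp0 hp1 n w y) (P_nonneg hβ0 hβ1 hp0 hp1 y w'))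
  rw [Pn_succ]
  exact lt_of_lt_of_le (mul_pos h1 h2) hle

/-- Reachability via positive one-step transitions. -/
def Reach (β p : ℝ) : Word → Word → Prop :=
  Relation.ReflTransGen (fun a b => 0 < P β p a b)

lemma reach_exists_pn {β p : ℝ} (hβ0 : 0 ≤ β) (hβ1 : β ≤ 1) (hp0 : 0 ≤ p) (hp1 : p ≤ 1)
    {w w' : Word} (h : Reach β p w w') : ∃ n, 0 < Pn β p n w w' := by
  induction h with
  | refl => exact ⟨0, by rw [Pn_zero, if_pos rfl]; norm_num⟩
  | tail hab hbc ih =>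
    obtain ⟨n, hn⟩ := ih
    exact ⟨n + 1, Pn_succ_pos hβ0 hβ1 hp0 hp1 hn hbc⟩

lemma reach_accessible {β p : ℝ} (hβ0 : 0 ≤ β) (hβ1 : β ≤ 1) (hp0 : 0 ≤ p) (hp1 : p ≤ 1)
    {w w' : Word} (hloop : 0 < P β p w' w') (h : Reach β p w w') :
    Accessible β p w w' := by
  obtain ⟨n, hn⟩ := reach_exists_pn hβ0 hβ1 hp0 hp1 h
  exact ⟨n + 1, Nat.succ_pos n, Pn_succ_pos hβ0 hβ1 hp0 hp1 hn hloop⟩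
/-! ### Norm decompositions -/

lemma getLast?_cons_of_ne {a : Bool} {t : Word} (h : t ≠ []) :
    (a :: t).getLast? = t.getLast? := by
  cases t with
  | nil => exact absurd rfl h
  | cons b s => exact List.getLast?_cons_cons

lemma ne_nil_of_getLast? {l : Word} {a : Bool} (h : l.getLast? = some a) : l ≠ [] := by
  intro h0; rw [h0, List.getLast?_nil] at h; cases h

lemma ne_nil_of_head? {l : Word} {a : Bool} (h : l.head? = some a) : l ≠ [] := by
  intro h0; rw [h0, List.head?_nil] at h; cases h

lemma norm_cons {w : Word} (h : Norm w) :
    ∃ t, w = false :: t ∧ t.getLast? = some true ∧ t ≠ [] := by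
  obtain ⟨h1, h2⟩ := h
  cases w with
  | nil => simp at h1
  | cons a t =>
    simp only [List.head?_cons, Option.some.injEq] at h1
    subst h1
    have ht : t ≠ [] := by
      intro h0
      subst h0
      exact absurd h2 (by decide)
    refine ⟨t, rfl, ?_, ht⟩
    rwa [getLast?_cons_of_ne ht] at h2

lemma norm_concat {w : Word} (h : Norm w) :
    ∃ u, w = u ++ [true] ∧ u ≠ [] ∧ u.head? = some false := by
  obtain ⟨h1, h2⟩ := h
  have hw : w ≠ [] := ne_nil_of_head? h1
  have hdec := List.dropLast_append_getLast hw
  have hlast : w.getLast hw = true := by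
    rw [List.getLast?_eq_getLast hw] at h2
    exact Option.some.injEq _ _ ▸ (by simpa using h2)
  rw [hlast] at hdec
  have hu : w.dropLast ≠ [] := by
    intro h0
    rw [h0] at hdec
    rw [← hdec] at h1
    simp at h1
  refine ⟨w.dropLast, hdec.symm, hu, ?_⟩
  rw [← hdec] at h1
  rwa [List.head?_append_of_ne_nil _ hu] at h1

lemma norm_ascent {w : Word} (h : Norm w) :
    ∃ k y, w = List.replicate k false ++ false :: true :: y ∧
      (y = [] ∨ y.getLast? = some true) := by
  obtain ⟨h1, h2⟩ := h
  induction w with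
  | nil => simp at h1
  | cons a t ih =>
    simp only [List.head?_cons, Option.some.injEq] at h1
    subst h1
    cases t with
    | nil => simp [List.getLast?] at h2
    | cons b s =>
      rw [List.getLast?_cons_cons] at h2
      cases b with
      | true =>
        refine ⟨0, s, by simp, ?_⟩
        cases s with
        | nil => exact Or.inl rfl
        | cons c r => exact Or.inr (by rwa [getLast?_cons_of_ne (by simp)] at h2)
      | false =>
        obtain ⟨k, y, heq, hy⟩ := ih rfl h2
        exact ⟨k + 1, y, by rw [List.replicate_succ, List.cons_append, heq], hy⟩

/-! ### Concrete positive moves -/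

section moves

variable {β p : ℝ}


/-- prepend a `0` (voter move). -/
lemma move_A (hβ : 0 < β) (hβ0 : 0 ≤ β) (hβ1 : β ≤ 1) (hp0 : 0 ≤ p) (hp1 : p ≤ 1) {w : Word} (h : Norm w) : 0 < P β p w (false :: w) := by
  obtain ⟨t, rfl, hlast, htne⟩ := norm_cons h
  refine voter_pos hβ hβ1 hp0 hp1 (T := []) (c := true) (d := false) (R := t ++ [false])
    false (by simp [pad]) (by simp) ?_
  rw [List.nil_append,
    show false :: false :: (t ++ [false]) = (false :: false :: t) ++ [false] by simp,
    strip_append_false]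
  exact strip_norm ⟨rfl, by rw [getLast?_cons_of_ne (by simp), getLast?_cons_of_ne htne]; exact hlast⟩

/-- delete the leading `0` and renormalize (voter move). -/
lemma move_B (hβ : 0 < β) (hβ0 : 0 ≤ β) (hβ1 : β ≤ 1) (hp0 : 0 ≤ p) (hp1 : p ≤ 1) {t : Word} : 0 < P β p (false :: t) (strip t) := by
  refine voter_pos hβ hβ1 hp0 hp1 (T := []) (c := true) (d := false) (R := t ++ [false])
    true (by simp [pad]) (by simp) ?_
  rw [List.nil_append, strip_cons_true, strip_cons_true, strip_append_false]

/-- append a `1` (voter move). -/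
lemma move_C (hβ : 0 < β) (hβ0 : 0 ≤ β) (hβ1 : β ≤ 1) (hp0 : 0 ≤ p) (hp1 : p ≤ 1) {w : Word} (h : Norm w) : 0 < P β p w (w ++ [true]) := by
  obtain ⟨u, rfl, hune, huh⟩ := norm_concat h
  refine voter_pos hβ hβ1 hp0 hp1 (T := true :: u) (c := true) (d := false) (R := [])
    true (by simp [pad]) (by simp) ?_
  rw [show (true :: u) ++ [true, true] = true :: ((u ++ [true]) ++ [true]) by simp,
    strip_cons_true]
  refine strip_norm ⟨?_, ?_⟩
  · rw [List.head?_append_of_ne_nil _ (by simp), List.head?_append_of_ne_nil _ hune]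
    exact huh
  · exact List.getLast?_concat

/-- flip a leading `01` to `00` (voter move). -/
lemma move_frontflip (hβ : 0 < β) (hβ0 : 0 ≤ β) (hβ1 : β ≤ 1) (hp0 : 0 ≤ p) (hp1 : p ≤ 1) {y : Word} (hy : y.getLast? = some true) :
    0 < P β p (false :: true :: y) (false :: false :: y) := by
  have hyne := ne_nil_of_getLast? hy
  refine voter_pos hβ hβ1 hp0 hp1 (T := [true]) (c := false) (d := true) (R := y ++ [false])
    false (by simp [pad]) (by simp) ?_
  rw [show [true] ++ false :: false :: (y ++ [false]) =
      true :: ((false :: false :: y) ++ [false]) by simp,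
    strip_cons_true, strip_append_false]
  exact strip_norm ⟨rfl, by
    rw [getLast?_cons_of_ne (by simp), getLast?_cons_of_ne hyne]; exact hy⟩

/-- insert a `1` after the leading `0` (exclusion move, `10 → 01` at the left boundary). -/
lemma move_E (hβlt : β < 1) (hplt : p < 1) (hβ0 : 0 ≤ β) (hβ1 : β ≤ 1) (hp0 : 0 ≤ p) (hp1 : p ≤ 1) {t : Word} (hlast : t.getLast? = some true) :
    0 < P β p (false :: t) (false :: true :: t) := by
  have htne := ne_nil_of_getLast? hlast
  refine swap_pos hβ0 hβ1 hp0 hp1 (T := []) (c := true) (d := false) (R := t ++ [false])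
    (by simp [pad]) (by simp) (by
      rw [if_pos rfl]
      exact mul_pos (by linarith) (by linarith)) ?_
  rw [List.nil_append,
    show false :: true :: (t ++ [false]) = (false :: true :: t) ++ [false] by simp,
    strip_append_false]
  exact strip_norm ⟨rfl, by
    rw [getLast?_cons_of_ne (by simp), getLast?_cons_of_ne htne]; exact hlast⟩

/-- the ground state can emit: `[] → [0,1]` (exclusion move). -/
lemma move_nil01 (hβlt : β < 1) (hplt : p < 1) (hβ0 : 0 ≤ β) (hβ1 : β ≤ 1) (hp0 : 0 ≤ p) (hp1 : p ≤ 1) : 0 < P β p [] [false, true] := by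
  refine swap_pos hβ0 hβ1 hp0 hp1 (T := []) (c := true) (d := false) (R := [])
    (by simp [pad]) (by simp) (by
      rw [if_pos rfl]
      exact mul_pos (by linarith) (by linarith)) ?_
  rfl

/-- insert a `0` before the final `1` (exclusion move, `10 → 01` at the right boundary). -/
lemma move_F (hβlt : β < 1) (hplt : p < 1) (hβ0 : 0 ≤ β) (hβ1 : β ≤ 1) (hp0 : 0 ≤ p) (hp1 : p ≤ 1) {x : Word} (hx : x.head? = some false) :
    0 < P β p (x ++ [true]) (x ++ [false, true]) := by
  have hxne := ne_nil_of_head? hx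
  refine swap_pos hβ0 hβ1 hp0 hp1 (T := true :: x) (c := true) (d := false) (R := [])
    (by simp [pad]) (by simp) (by
      rw [if_pos rfl]
      exact mul_pos (by linarith) (by linarith)) ?_
  rw [show (true :: x) ++ [false, true] = true :: (x ++ [false, true]) by simp,
    strip_cons_true]
  refine strip_norm ⟨?_, ?_⟩
  · rw [List.head?_append_of_ne_nil _ hxne]; exact hx
  · rw [show x ++ [false, true] = (x ++ [false]) ++ [true] by simp]
    exact List.getLast?_concat

/-- interior `01 → 10` swap. -/
lemma move_swap01_mid (hβlt : β < 1) (hppos : 0 < p) (hβ0 : 0 ≤ β) (hβ1 : β ≤ 1) (hp0 : 0 ≤ p) (hp1 : p ≤ 1) {x y : Word}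
    (hx : x.head? = some false) (hy : y.getLast? = some true) :
    0 < P β p (x ++ false :: true :: y) (x ++ true :: false :: y) := by
  have hxne := ne_nil_of_head? hx
  have hyne := ne_nil_of_getLast? hy
  refine swap_pos hβ0 hβ1 hp0 hp1 (T := true :: x) (c := false) (d := true)
    (R := y ++ [false]) (by simp [pad]) (by simp)
    (by
      rw [if_neg (by simp)]
      exact mul_pos (by linarith) hppos) ?_
  rw [show (true :: x) ++ true :: false :: (y ++ [false]) =
      true :: ((x ++ true :: false :: y) ++ [false]) by simp,
    strip_cons_true, strip_append_false]
  refine strip_norm ⟨?_, ?_⟩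
  · rw [List.head?_append_of_ne_nil _ hxne]; exact hx
  · rw [show x ++ true :: false :: y = (x ++ [true, false]) ++ y by simp,
      List.getLast?_append_of_ne_nil _ hyne]
    exact hy

/-- `01 → 10` swap at the left boundary: deletes the `1`. -/
lemma move_swap01_left (hβlt : β < 1) (hppos : 0 < p) (hβ0 : 0 ≤ β) (hβ1 : β ≤ 1) (hp0 : 0 ≤ p) (hp1 : p ≤ 1) {y : Word}
    (hy : y.getLast? = some true) :
    0 < P β p (false :: true :: y) (false :: y) := by
  have hyne := ne_nil_of_getLast? hy
  refine swap_pos hβ0 hβ1 hp0 hp1 (T := [true]) (c := false) (d := true)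
    (R := y ++ [false]) (by simp [pad]) (by simp)
    (by
      rw [if_neg (by simp)]
      exact mul_pos (by linarith) hppos) ?_
  rw [show [true] ++ true :: false :: (y ++ [false]) =
      true :: true :: ((false :: y) ++ [false]) by simp,
    strip_cons_true, strip_cons_true, strip_append_false]
  exact strip_norm ⟨rfl, by rw [getLast?_cons_of_ne hyne]; exact hy⟩

/-- `01 → 10` swap at the right boundary: deletes the `0`. -/
lemma move_swap01_right (hβlt : β < 1) (hppos : 0 < p) (hβ0 : 0 ≤ β) (hβ1 : β ≤ 1) (hp0 : 0 ≤ p) (hp1 : p ≤ 1) {x : Word}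
    (hx : x.head? = some false) :
    0 < P β p (x ++ [false, true]) (x ++ [true]) := by
  have hxne := ne_nil_of_head? hx
  refine swap_pos hβ0 hβ1 hp0 hp1 (T := true :: x) (c := false) (d := true)
    (R := [false]) (by simp [pad]) (by simp)
    (by
      rw [if_neg (by simp)]
      exact mul_pos (by linarith) hppos) ?_
  rw [show (true :: x) ++ [true, false, false] =
      true :: (((x ++ [true]) ++ [false]) ++ [false]) by simp,
    strip_cons_true, strip_append_false, strip_append_false]
  refine strip_norm ⟨?_, List.getLast?_concat⟩
  rw [List.head?_append_of_ne_nil _ hxne]; exact hx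

/-- interior `10 → 01` swap. -/
lemma move_swap10_mid (hβlt : β < 1) (hplt : p < 1) (hβ0 : 0 ≤ β) (hβ1 : β ≤ 1) (hp0 : 0 ≤ p) (hp1 : p ≤ 1) {x y : Word}
    (hx : x.head? = some false) (hy : y.getLast? = some true) :
    0 < P β p (x ++ true :: false :: y) (x ++ false :: true :: y) := by
  have hxne := ne_nil_of_head? hx
  have hyne := ne_nil_of_getLast? hy
  refine swap_pos hβ0 hβ1 hp0 hp1 (T := true :: x) (c := true) (d := false)
    (R := y ++ [false]) (by simp [pad]) (by simp)
    (by
      rw [if_pos rfl]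
      exact mul_pos (by linarith) (by linarith)) ?_
  rw [show (true :: x) ++ false :: true :: (y ++ [false]) =
      true :: ((x ++ false :: true :: y) ++ [false]) by simp,
    strip_cons_true, strip_append_false]
  refine strip_norm ⟨?_, ?_⟩
  · rw [List.head?_append_of_ne_nil _ hxne]; exact hx
  · rw [show x ++ false :: true :: y = (x ++ [false, true]) ++ y by simp,
      List.getLast?_append_of_ne_nil _ hyne]
    exact hy

/-- every nonempty configuration has a positive holding probability when `β < 1`. -/
lemma move_stay (hβlt : β < 1) (hβ0 : 0 ≤ β) (hβ1 : β ≤ 1) (hp0 : 0 ≤ p) (hp1 : p ≤ 1) {w : Word} (h : Norm w) : 0 < P β p w w := by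
  rcases lt_or_ge p 1 with hplt | hpge
  · obtain ⟨k, y, rfl, _⟩ := norm_ascent h
    refine stay_pos hβ0 hβ1 hp0 hp1 (T := true :: List.replicate k false) (c := false)
      (d := true) (R := y ++ [false]) (by simp [pad]) (by simp) ?_
    rw [if_neg (by simp)]
    exact mul_pos (by linarith) (by linarith)
  · obtain ⟨u, rfl, _, _⟩ := norm_concat h
    refine stay_pos hβ0 hβ1 hp0 hp1 (T := true :: u) (c := true)
      (d := false) (R := []) (by simp [pad]) (by simp) ?_
    have hpp : 0 < p := by linarith
    rw [if_pos rfl]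
    have h2 : (0:ℝ) < (1 - β) * p := mul_pos (by linarith) hpp
    linarith [h2]

/-- `[0,1] → []` by a voter flip. -/
lemma move_01nil_voter (hβ : 0 < β) (hβ0 : 0 ≤ β) (hβ1 : β ≤ 1) (hp0 : 0 ≤ p) (hp1 : p ≤ 1) : 0 < P β p [false, true] [] := by
  refine voter_pos hβ hβ1 hp0 hp1 (T := [true, false]) (c := true) (d := false)
    (R := []) false (by rfl) (by simp) ?_
  rfl

/-- `[0,1] → []` by an exclusion swap. -/
lemma move_01nil_swap (hβlt : β < 1) (hppos : 0 < p) (hβ0 : 0 ≤ β) (hβ1 : β ≤ 1) (hp0 : 0 ≤ p) (hp1 : p ≤ 1) : 0 < P β p [false, true] [] := by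
  refine swap_pos hβ0 hβ1 hp0 hp1 (T := [true]) (c := false) (d := true)
    (R := [false]) (by simp [pad]) (by simp)
    (by
      rw [if_neg (by simp)]
      exact mul_pos (by linarith) hppos) ?_
  rfl

/-- the exact holding probability of the ground state. -/
lemma P_nil_nil : P β p [] [] = β + (1 - β) * p := by
  have hu : unlike ([] : Word) = [0] := rfl
  unfold P
  rw [hu]
  simp only [List.map_cons, List.map_nil, List.sum_cons, List.sum_nil]
  norm_num [pad, setPair, swapPair, strip]
  rw [if_neg (show ¬([false, true] = ([] : Word)) by decide)]
  ring

end moves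
/-! ### Inversion count -/

/-- number of `10` inversions. -/
def inv : Word → ℕ
  | [] => 0
  | true :: t => t.count false + inv t
  | false :: t => inv t

lemma inv_cons_false (t : Word) : inv (false :: t) = inv t := rfl

lemma inv_concat_true : ∀ u : Word, inv (u ++ [true]) = inv u := by
  intro u
  induction u with
  | nil => rfl
  | cons a u ih =>
    cases a with
    | false => simpa [inv] using ih
    | true => simp [inv, ih, List.count_append]

lemma inv_swap : ∀ x y : Word,
    inv (x ++ false :: true :: y) + 1 = inv (x ++ true :: false :: y) := by
  intro x y
  induction x with
  | nil =>
    show inv (true :: y) + 1 = (false :: y).count false + inv (false :: y)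
    simp [inv, List.count_cons]
    omega
  | cons a x ih =>
    cases a with
    | false => simpa [inv] using ih
    | true =>
      show (x ++ false :: true :: y).count false + inv (x ++ false :: true :: y) + 1 =
        (x ++ true :: false :: y).count false + inv (x ++ true :: false :: y)
      have hc : (x ++ false :: true :: y).count false = (x ++ true :: false :: y).count false := by
        simp [List.count_append, List.count_cons]
      omega

/-! ### Sorted-or-descent decomposition -/

lemma aux_true_block : ∀ s : Word, (s = [] ∨ s.getLast? = some true) →
    (∃ b, true :: s = List.replicate (b + 1) true) ∨
    (∃ x2 y2, true :: s = x2 ++ true :: false :: y2 ∧ y2.getLast? = some true) := by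
  intro s
  induction s with
  | nil => intro _; exact Or.inl ⟨0, rfl⟩
  | cons c r ih =>
    intro hs
    have hlast : (c :: r).getLast? = some true := by
      rcases hs with h | h
      · exact absurd h (by simp)
      · exact h
    cases c with
    | true =>
      have hr : r = [] ∨ r.getLast? = some true := by
        cases r with
        | nil => exact Or.inl rfl
        | cons d q => exact Or.inr (by rwa [getLast?_cons_of_ne (by simp)] at hlast)
      rcases ih hr with ⟨b, hb⟩ | ⟨x2, y2, hx2, hy2⟩
      · exact Or.inl ⟨b + 1, by rw [List.replicate_succ, ← hb]⟩
      · exact Or.inr ⟨true :: x2, y2, by rw [List.cons_append, ← hx2], hy2⟩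
    | false =>
      have hrne : r ≠ [] := by
        intro h0
        subst h0
        exact absurd hlast (by decide)
      have hr : r.getLast? = some true := by rwa [getLast?_cons_of_ne hrne] at hlast
      exact Or.inr ⟨[], r, rfl, hr⟩

lemma norm_sorted_or_descent {w : Word} (h : Norm w) :
    (∃ a b, w = List.replicate (a + 1) false ++ List.replicate (b + 1) true) ∨
    (∃ x y, w = x ++ true :: false :: y ∧ x.head? = some false ∧
      y.getLast? = some true) := by
  obtain ⟨h1, h2⟩ := h
  induction w with
  | nil => simp at h1
  | cons a t ih =>
    simp only [List.head?_cons, Option.some.injEq] at h1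
    subst h1
    cases t with
    | nil => exact absurd h2 (by decide)
    | cons b s =>
      rw [List.getLast?_cons_cons] at h2
      cases b with
      | false =>
        rcases ih rfl h2 with ⟨a, b, heq⟩ | ⟨x, y, heq, hx, hy⟩
        · exact Or.inl ⟨a + 1, b, by
            rw [heq]; simp [List.replicate_succ]⟩
        · exact Or.inr ⟨false :: x, y, by rw [heq, List.cons_append], rfl, hy⟩
      | true =>
        have hs : s = [] ∨ s.getLast? = some true := by
          cases s with
          | nil => exact Or.inl rfl
          | cons c r => exact Or.inr (by rwa [getLast?_cons_of_ne (by simp)] at h2)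
        rcases aux_true_block s hs with ⟨b2, hb⟩ | ⟨x2, y2, hx2, hy2⟩
        · exact Or.inl ⟨0, b2, by rw [show List.replicate (0+1) false = [false] from rfl,
            List.singleton_append, hb]⟩
        · exact Or.inr ⟨false :: x2, y2, by rw [hx2, List.cons_append], rfl, hy2⟩

/-! ### The four reachability schemes -/

/-- shrink to `[0,1]` by voter moves (needs `β > 0`). -/
lemma shrink_voter {β p : ℝ} (hβ : 0 < β) (hβ1 : β ≤ 1) (hp0 : 0 ≤ p) (hp1 : p ≤ 1) :
    ∀ w : Word, Norm w → Reach β p w [false, true] := by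
  have main : ∀ n (w : Word), w.count true + w.length ≤ n → Norm w →
      Reach β p w [false, true] := by
    intro n
    induction n with
    | zero =>
      intro w hn hw
      obtain ⟨t, rfl, _, _⟩ := norm_cons hw
      simp at hn
    | succ n ih =>
      intro w hn hw
      obtain ⟨t, rfl, hlast, htne⟩ := norm_cons hw
      cases t with
      | nil => exact absurd rfl htne
      | cons b s =>
        cases b with
        | false =>
          have hts : Norm (false :: s) := ⟨rfl, hlast⟩
          have hstep : 0 < P β p (false :: false :: s) (false :: s) := by
            have h := move_B (p := p) hβ hβ.le hβ1 hp0 hp1 (t := false :: s)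
            rwa [strip_norm hts] at h
          refine Relation.ReflTransGen.head hstep (ih _ ?_ hts)
          simp [List.count_cons] at hn ⊢
          omega
        | true =>
          cases s with
          | nil => exact Relation.ReflTransGen.refl
          | cons c r =>
            have hy : (c :: r).getLast? = some true := by
              rwa [getLast?_cons_of_ne (by simp)] at hlast
            have hstep := move_frontflip hβ hβ.le hβ1 hp0 hp1 hy
            have hts : Norm (false :: false :: c :: r) :=
              ⟨rfl, by rw [getLast?_cons_of_ne (by simp), getLast?_cons_of_ne (by simp)]
                       exact hy⟩
            refine Relation.ReflTransGen.head hstep (ih _ ?_ hts)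
            simp [List.count_cons] at hn ⊢
            omega
  exact fun w hw => main (w.count true + w.length) w le_rfl hw

/-- grow from `[0,1]` using prepend-0 and insert-1 moves (needs `β > 0`, `p < 1`). -/
lemma grow_AE {β p : ℝ} (hβ : 0 < β) (hβ1 : β ≤ 1) (hp0 : 0 ≤ p) (hp1 : p ≤ 1)
    (hβlt : β < 1) (hplt : p < 1) :
    ∀ w : Word, Norm w → Reach β p [false, true] w := by
  have main : ∀ n (w : Word), w.length ≤ n → Norm w → Reach β p [false, true] w := by
    intro n
    induction n with
    | zero =>
      intro w hn hw
      obtain ⟨t, rfl, _, _⟩ := norm_cons hw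
      simp at hn
    | succ n ih =>
      intro w hn hw
      obtain ⟨t, rfl, hlast, htne⟩ := norm_cons hw
      cases t with
      | nil => exact absurd rfl htne
      | cons b s =>
        cases b with
        | false =>
          have hts : Norm (false :: s) := ⟨rfl, hlast⟩
          refine Relation.ReflTransGen.tail (ih _ ?_ hts)
            (move_A hβ hβ.le hβ1 hp0 hp1 hts)
          simp at hn ⊢
          omega
        | true =>
          cases s with
          | nil => exact Relation.ReflTransGen.refl
          | cons c r =>
            have hy : (c :: r).getLast? = some true := by
              rwa [getLast?_cons_of_ne (by simp)] at hlast
            have hts : Norm (false :: c :: r) := ⟨rfl, by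
              rw [getLast?_cons_of_ne (by simp)]; exact hy⟩
            refine Relation.ReflTransGen.tail (ih _ ?_ hts)
              (move_E hβlt hplt hβ.le hβ1 hp0 hp1 hy)
            simp at hn ⊢
            omega
  exact fun w hw => main w.length w le_rfl hw

/-- grow from `[0,1]` by building the sorted word and then moving `1`s left
(needs `β > 0`, `p > 0`). -/
lemma grow_sort {β p : ℝ} (hβ : 0 < β) (hβ1 : β ≤ 1) (hp0 : 0 ≤ p) (hp1 : p ≤ 1)
    (hβlt : β < 1) (hppos : 0 < p) :
    ∀ w : Word, Norm w → Reach β p [false, true] w := by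
  have main : ∀ n (w : Word), w.length + inv w ≤ n → Norm w →
      Reach β p [false, true] w := by
    intro n
    induction n with
    | zero =>
      intro w hn hw
      obtain ⟨t, rfl, _, _⟩ := norm_cons hw
      simp at hn
    | succ n ih =>
      intro w hn hw
      rcases norm_sorted_or_descent hw with ⟨a, b, rfl⟩ | ⟨x, y, rfl, hx, hy⟩
      · cases a with
        | zero =>
          cases b with
          | zero => exact Relation.ReflTransGen.refl
          | succ b =>
            have hrw : List.replicate (0 + 1) false ++ List.replicate (b + 1 + 1) true
                = (false :: List.replicate (b + 1) true) ++ [true] := by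
              simp [List.replicate_succ']
            rw [hrw]
            have hu : Norm (false :: List.replicate (b + 1) true) := by
              refine ⟨rfl, ?_⟩
              rw [getLast?_cons_of_ne (by simp), List.replicate_succ',
                List.getLast?_concat]
            refine Relation.ReflTransGen.tail (ih _ ?_ hu)
              (move_C hβ hβ.le hβ1 hp0 hp1 hu)
            rw [hrw] at hn
            have hinv : inv (false :: (List.replicate (b + 1) true ++ [true]))
                = inv (false :: List.replicate (b + 1) true) := by
              simpa using inv_concat_true (false :: List.replicate (b + 1) true)
            simp at hn ⊢
            omega
        | succ a =>
          have hrw : List.replicate (a + 1 + 1) false ++ List.replicate (b + 1) true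
              = false :: (List.replicate (a + 1) false ++ List.replicate (b + 1) true) := by
            simp [List.replicate_succ]
          rw [hrw]
          have ht : Norm (List.replicate (a + 1) false ++ List.replicate (b + 1) true) := by
            refine ⟨?_, ?_⟩
            · rw [List.head?_append_of_ne_nil _ (by simp)]
              simp [List.replicate_succ]
            · rw [List.getLast?_append_of_ne_nil _ (by simp),
                List.replicate_succ', List.getLast?_concat]
          refine Relation.ReflTransGen.tail (ih _ ?_ ht)
            (move_A hβ hβ.le hβ1 hp0 hp1 ht)
          rw [hrw] at hn
          have : inv (false :: (List.replicate (a + 1) false ++ List.replicate (b + 1) true))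
              = inv (List.replicate (a + 1) false ++ List.replicate (b + 1) true) := rfl
          simp at hn ⊢
          omega
      · -- descent: predecessor x ++ 0 :: 1 :: y
        have hw' : Norm (x ++ false :: true :: y) := by
          refine ⟨?_, ?_⟩
          · rw [List.head?_append_of_ne_nil _ (ne_nil_of_head? hx)]; exact hx
          · rw [show x ++ false :: true :: y = (x ++ [false, true]) ++ y by simp,
              List.getLast?_append_of_ne_nil _ (ne_nil_of_getLast? hy)]
            exact hy
        refine Relation.ReflTransGen.tail (ih _ ?_ hw')
          (move_swap01_mid hβlt hppos hβ.le hβ1 hp0 hp1 hx hy)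
        have hswap := inv_swap x y
        simp at hn ⊢
        omega
  exact fun w hw => main (w.length + inv w) w le_rfl hw

/-- both directions by pure exclusion moves (needs `β < 1`, `0 < p < 1`). -/
lemma scheme_swap {β p : ℝ} (hβ0 : 0 ≤ β) (hβ1 : β ≤ 1) (hp0 : 0 ≤ p) (hp1 : p ≤ 1)
    (hβlt : β < 1) (hppos : 0 < p) (hplt : p < 1) :
    ∀ w : Word, Norm w →
      Reach β p w [false, true] ∧ Reach β p [false, true] w := by
  have main : ∀ n (w : Word), w.length ≤ n → Norm w →
      Reach β p w [false, true] ∧ Reach β p [false, true] w := by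
    intro n
    induction n with
    | zero =>
      intro w hn hw
      obtain ⟨t, rfl, _, _⟩ := norm_cons hw
      simp at hn
    | succ n ih =>
      have inner : ∀ k (y : Word), (y = [] ∨ y.getLast? = some true) →
          (List.replicate k false ++ false :: true :: y).length ≤ n + 1 →
          Reach β p (List.replicate k false ++ false :: true :: y) [false, true] ∧
          Reach β p [false, true] (List.replicate k false ++ false :: true :: y) := by
        intro k
        induction k with
        | zero =>
          intro y hy hlen
          rcases hy with rfl | hy
          · constructor <;> exact Relation.ReflTransGen.refl
          · have hyne := ne_nil_of_getLast? hy
            have hw' : Norm (false :: y) :=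
              ⟨rfl, by rw [getLast?_cons_of_ne hyne]; exact hy⟩
            have hlen' : (false :: y).length ≤ n := by simp at hlen ⊢; omega
            obtain ⟨r1, r2⟩ := ih _ hlen' hw'
            have hfwd : 0 < P β p (List.replicate 0 false ++ false :: true :: y)
                (false :: y) := move_swap01_left hβlt hppos hβ0 hβ1 hp0 hp1 hy
            have hbwd : 0 < P β p (false :: y)
                (List.replicate 0 false ++ false :: true :: y) :=
              move_E hβlt hplt hβ0 hβ1 hp0 hp1 hy
            exact ⟨Relation.ReflTransGen.head hfwd r1, Relation.ReflTransGen.tail r2 hbwd⟩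
        | succ k ihk =>
          intro y hy hlen
          have hxh : (List.replicate (k + 1) false).head? = some false := by
            simp [List.replicate_succ]
          rcases hy with rfl | hy
          · -- w = 0^{k+1} ++ [0,1] ; predecessor 0^{k+1} ++ [1]
            have heq : List.replicate (k + 1) false ++ [true]
                = List.replicate k false ++ false :: true :: ([] : Word) := by
              simp [List.replicate_succ']
            have hw' : Norm (List.replicate (k + 1) false ++ [true]) := by
              refine ⟨?_, List.getLast?_concat⟩
              rw [List.head?_append_of_ne_nil _ (by simp)]
              exact hxh
            have hlen' : (List.replicate (k + 1) false ++ [true]).length ≤ n := by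
              simp at hlen ⊢
              omega
            obtain ⟨r1, r2⟩ := ih _ hlen' hw'
            have hfwd : 0 < P β p (List.replicate (k + 1) false ++ false :: true :: ([] : Word))
                (List.replicate (k + 1) false ++ [true]) := by
              have h := move_swap01_right hβlt hppos hβ0 hβ1 hp0 hp1 hxh
              exact h
            have hbwd : 0 < P β p (List.replicate (k + 1) false ++ [true])
                (List.replicate (k + 1) false ++ false :: true :: ([] : Word)) := by
              have h := move_F hβlt hplt hβ0 hβ1 hp0 hp1 hxh
              exact h
            exact ⟨Relation.ReflTransGen.head hfwd r1, Relation.ReflTransGen.tail r2 hbwd⟩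
          · -- w = 0^{k+1} ++ 0 :: 1 :: y ; same-length predecessor 0^k ++ 0 :: 1 :: (0 :: y)
            have hyne := ne_nil_of_getLast? hy
            have heq : List.replicate (k + 1) false ++ true :: false :: y
                = List.replicate k false ++ false :: true :: (false :: y) := by
              simp [List.replicate_succ']
            have hy' : (false :: y) = [] ∨ (false :: y).getLast? = some true :=
              Or.inr (by rw [getLast?_cons_of_ne hyne]; exact hy)
            have hlen' : (List.replicate k false ++ false :: true :: (false :: y)).length
                ≤ n + 1 := by
              simp at hlen ⊢
              omega
            obtain ⟨r1, r2⟩ := ihk (false :: y) hy' hlen'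
            have hfwd : 0 < P β p (List.replicate (k + 1) false ++ false :: true :: y)
                (List.replicate k false ++ false :: true :: (false :: y)) := by
              have h := move_swap01_mid hβlt hppos hβ0 hβ1 hp0 hp1 hxh hy
              rwa [heq] at h
            have hbwd : 0 < P β p (List.replicate k false ++ false :: true :: (false :: y))
                (List.replicate (k + 1) false ++ false :: true :: y) := by
              have h := move_swap10_mid hβlt hplt hβ0 hβ1 hp0 hp1 hxh hy
              rwa [heq] at h
            exact ⟨Relation.ReflTransGen.head hfwd r1, Relation.ReflTransGen.tail r2 hbwd⟩
      intro w hn hw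
      obtain ⟨k, y, rfl, hy⟩ := norm_ascent hw
      exact inner k y hy hn
  exact fun w hw => main w.length w le_rfl hw

lemma Pn_one {β p : ℝ} (w w' : Word) : Pn β p 1 w w' = P β p w w' := by
  rw [Pn_succ]
  rw [tsum_eq_single w (fun z hz => by
    rw [Pn_zero, if_neg (fun h => hz h.symm), zero_mul])]
  rw [Pn_zero, if_pos rfl, one_mul]

/-- Proposition 1: `𝒟₀` is absorbing under `Pr_{β,1}`; if `β ≠ 1` and
`(β,p) ∉ {(0,0),(0,1)}` then all states of `𝒟 ∖ {𝒟₀}` communicate; if moreover `p < 1`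
and `(β,p) ≠ (0,0)` then all states of `𝒟` communicate and the chain is irreducible
and aperiodic. -/
theorem exclusionVoter_communication :
    (∀ β : ℝ, 0 ≤ β → β ≤ 1 → P β 1 groundState groundState = 1) ∧
    (∀ β p : ℝ, 0 ≤ β → β ≤ 1 → 0 ≤ p → p ≤ 1 → β ≠ 1 →
      (β, p) ≠ ((0 : ℝ), (0 : ℝ)) → (β, p) ≠ ((0 : ℝ), (1 : ℝ)) →
      ∀ w w' : Word, IsConfig w → IsConfig w' →
        w ≠ groundState → w' ≠ groundState → Communicate β p w w') ∧
    (∀ β p : ℝ, 0 ≤ β → β ≤ 1 → 0 ≤ p → p < 1 → β ≠ 1 →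
      (β, p) ≠ ((0 : ℝ), (0 : ℝ)) →
      (∀ w w' : Word, IsConfig w → IsConfig w' → Communicate β p w w') ∧
      (∀ w : Word, IsConfig w →
        ∀ d : ℕ, (∀ n : ℕ, 0 < n → 0 < Pn β p n w w → d ∣ n) → d = 1)) := by
  refine ⟨?_, ?_, ?_⟩
  · -- (i) ground state absorbing for p = 1
    intro β hβ0 hβ1
    show P β 1 [] [] = 1
    rw [P_nil_nil]
    ring
  · -- (ii) communication away from the ground state
    intro β p hβ0 hβ1 hp0 hp1 hβne h00 h01 w w' hw hw' hwne hw'ne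
    have hβlt : β < 1 := lt_of_le_of_ne hβ1 hβne
    have hNw : Norm w := by
      rcases hw with h | h
      · exact absurd h hwne
      · exact h
    have hNw' : Norm w' := by
      rcases hw' with h | h
      · exact absurd h hw'ne
      · exact h
    have hschemes : (∀ v : Word, Norm v → Reach β p v [false, true]) ∧
        (∀ v : Word, Norm v → Reach β p [false, true] v) := by
      by_cases hp1' : p = 1
      · have hβpos : 0 < β := by
          rcases eq_or_lt_of_le hβ0 with h | h
          · exact absurd (by rw [← h, hp1']) h01
          · exact h
        subst hp1'
        exact ⟨shrink_voter hβpos hβ1 hp0 hp1,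
          grow_sort hβpos hβ1 hp0 hp1 hβlt one_pos⟩
      · by_cases hp0' : p = 0
        · have hβpos : 0 < β := by
            rcases eq_or_lt_of_le hβ0 with h | h
            · exact absurd (by rw [← h, hp0']) h00
            · exact h
          subst hp0'
          exact ⟨shrink_voter hβpos hβ1 hp0 hp1,
            grow_AE hβpos hβ1 hp0 hp1 hβlt (by norm_num)⟩
        · have hppos : 0 < p := lt_of_le_of_ne hp0 (Ne.symm hp0')
          have hplt : p < 1 := lt_of_le_of_ne hp1 hp1'
          have h := scheme_swap hβ0 hβ1 hp0 hp1 hβlt hppos hplt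
          exact ⟨fun v hv => (h v hv).1, fun v hv => (h v hv).2⟩
    obtain ⟨hto, hfrom⟩ := hschemes
    exact ⟨reach_accessible hβ0 hβ1 hp0 hp1 (move_stay hβlt hβ0 hβ1 hp0 hp1 hNw')
        ((hto w hNw).trans (hfrom w' hNw')),
      reach_accessible hβ0 hβ1 hp0 hp1 (move_stay hβlt hβ0 hβ1 hp0 hp1 hNw)
        ((hto w' hNw').trans (hfrom w hNw))⟩
  · -- (iii) full communication and aperiodicity
    intro β p hβ0 hβ1 hp0 hplt hβne h00
    have hp1 : p ≤ 1 := hplt.le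
    have hβlt : β < 1 := lt_of_le_of_ne hβ1 hβne
    have hor : 0 < β ∨ 0 < p := by
      rcases eq_or_lt_of_le hβ0 with h | h
      · rcases eq_or_lt_of_le hp0 with h2 | h2
        · exact absurd (by rw [← h, ← h2]) h00
        · exact Or.inr h2
      · exact Or.inl h
    have hloopnil : 0 < P β p [] [] := by
      rw [P_nil_nil]
      rcases hor with h | h
      · have : 0 ≤ (1 - β) * p := mul_nonneg (by linarith) hp0
        linarith
      · have : 0 < (1 - β) * p := mul_pos (by linarith) h
        linarith
    have hnil01 : 0 < P β p [] [false, true] := move_nil01 hβlt hplt hβ0 hβ1 hp0 hp1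
    have h01nil : 0 < P β p [false, true] [] := by
      rcases hor with h | h
      · exact move_01nil_voter h hβ0 hβ1 hp0 hp1
      · exact move_01nil_swap hβlt h hβ0 hβ1 hp0 hp1
    have hschemes : (∀ v : Word, Norm v → Reach β p v [false, true]) ∧
        (∀ v : Word, Norm v → Reach β p [false, true] v) := by
      by_cases hp0' : p = 0
      · have hβpos : 0 < β := by
          rcases hor with h | h
          · exact h
          · exact absurd hp0' (by intro h0; rw [h0] at h; exact lt_irrefl 0 h)
        subst hp0'
        exact ⟨shrink_voter hβpos hβ1 hp0 hp1,
          grow_AE hβpos hβ1 hp0 hp1 hβlt hplt⟩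
      · have hppos : 0 < p := lt_of_le_of_ne hp0 (Ne.symm hp0')
        have h := scheme_swap hβ0 hβ1 hp0 hp1 hβlt hppos hplt
        exact ⟨fun v hv => (h v hv).1, fun v hv => (h v hv).2⟩
    obtain ⟨hto, hfrom⟩ := hschemes
    have toB : ∀ v : Word, IsConfig v → Reach β p v [false, true] := by
      intro v hv
      rcases hv with rfl | hv
      · exact Relation.ReflTransGen.single hnil01
      · exact hto v hv
    have fromB : ∀ v : Word, IsConfig v → Reach β p [false, true] v := by
      intro v hv
      rcases hv with rfl | hv
      · exact Relation.ReflTransGen.single h01nil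
      · exact hfrom v hv
    have loop : ∀ v : Word, IsConfig v → 0 < P β p v v := by
      intro v hv
      rcases hv with rfl | hv
      · exact hloopnil
      · exact move_stay hβlt hβ0 hβ1 hp0 hp1 hv
    constructor
    · intro w w' hw hw'
      exact ⟨reach_accessible hβ0 hβ1 hp0 hp1 (loop w' hw')
          ((toB w hw).trans (fromB w' hw')),
        reach_accessible hβ0 hβ1 hp0 hp1 (loop w hw)
          ((toB w' hw').trans (fromB w hw))⟩
    · intro w hw d hd
      have h1 : 0 < Pn β p 1 w w := by
        rw [Pn_one]
        exact loop w hw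
      exact Nat.dvd_one.mp (hd 1 one_pos h1)
end EV
end

section
/- Suppose β = 0 (pure exclusion) and fix any initial configuration ξ₀ = S₀ ∈ 𝒟. There exists C ∈ (0,∞) (depending only on S₀) such that for every p ∈ [0,1], Pr_{0,p}-almost surely, for all t ∈ ℕ, max_{0 ≤ s ≤ t} N(ξ_s) ≤ C t^{1/2}. -/
open MeasureTheory Filter
open scoped ENNReal NNReal

namespace EV

/-! ### Auxiliary machinery -/

/-- Fold step computing (number of `0`s so far, number of (0,1)-inversions so far). -/
def stp : ℕ × ℕ → Bool → ℕ × ℕ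
  | s, true => (s.1, s.2 + s.1)
  | s, false => (s.1 + 1, s.2)

/-- The number of inversions (pairs `a < b` with `w a = 0`, `w b = 1`). -/
def F (u : Word) : ℕ := (u.foldl stp (0,0)).2
/-- The number of `0`s. -/
def ZC (u : Word) : ℕ := (u.foldl stp (0,0)).1
/-- Inversions started from `z` pre-existing zeros. -/
def Fz (z : ℕ) (u : Word) : ℕ := (u.foldl stp (z,0)).2

@[simp] lemma stp_true (s : ℕ × ℕ) : stp s true = (s.1, s.2 + s.1) := rfl
@[simp] lemma stp_false (s : ℕ × ℕ) : stp s false = (s.1 + 1, s.2) := rfl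

lemma foldl_eq (u : Word) : ∀ z t : ℕ,
    u.foldl stp (z,t) = ((u.foldl stp (z,0)).1, t + (u.foldl stp (z,0)).2) := by
  induction u with
  | nil => simp
  | cons b u ih =>
    intro z t
    cases b
    · simp only [List.foldl_cons, stp_false]
      exact ih (z+1) t
    · simp only [List.foldl_cons, stp_true]
      rw [ih z (t+z), ih z (0+z)]
      ext <;> simp <;> omega

lemma fst_eq (u : Word) : ∀ z t : ℕ, (u.foldl stp (z,t)).1 = z + ZC u := by
  induction u with
  | nil => simp [ZC]
  | cons b u ih =>
    intro z t
    cases b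
    · have h1 : ZC (false :: u) = (List.foldl stp (1, 0) u).1 := by
        simp only [ZC, List.foldl_cons, stp_false]
      simp only [List.foldl_cons, stp_false]
      rw [ih (z+1) t, h1, ih 1 0]; omega
    · have h1 : ZC (true :: u) = (List.foldl stp (0, 0) u).1 := by
        simp only [ZC, List.foldl_cons, stp_true]
      simp only [List.foldl_cons, stp_true]
      rw [ih z (t+z), h1, ih 0 0]; omega

lemma Fz_append (z : ℕ) (u v : Word) : Fz z (u ++ v) = Fz z u + Fz (z + ZC u) v := by
  simp only [Fz, List.foldl_append]
  rw [show u.foldl stp (z,0) = (z + ZC u, Fz z u) from Prod.ext (fst_eq u z 0) rfl,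
    foldl_eq]

lemma ZC_append (u v : Word) : ZC (u ++ v) = ZC u + ZC v := by
  conv_lhs => rw [ZC]
  rw [List.foldl_append,
    show u.foldl stp (0,0) = (0 + ZC u, Fz 0 u) from Prod.ext (fst_eq u 0 0) rfl,
    fst_eq]
  omega

lemma F_eq_Fz (u : Word) : F u = Fz 0 u := rfl

lemma F_append (u v : Word) : F (u ++ v) = F u + Fz (ZC u) v := by
  rw [F_eq_Fz, Fz_append]; simp [F_eq_Fz]

lemma F_cons_true (v : Word) : F (true :: v) = F v := rfl

lemma F_concat_false (v : Word) : F (v ++ [false]) = F v := by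
  rw [F_append]; simp [Fz, stp]

lemma F_rep_true (k : ℕ) (v : Word) : F (List.replicate k true ++ v) = F v := by
  induction k with
  | zero => simp
  | succ k ih => rw [List.replicate_succ, List.cons_append, F_cons_true, ih]

lemma F_rep_false (v : Word) (k : ℕ) : F (v ++ List.replicate k false) = F v := by
  induction k with
  | zero => simp
  | succ k ih =>
    rw [List.replicate_succ', ← List.append_assoc, F_concat_false, ih]

lemma F_strip (w : Word) : F (strip w) = F w := by
  set u := w.dropWhile (· = true) with hu
  have h1 : w = List.replicate (w.takeWhile (· = true)).length true ++ u := by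
    conv_lhs => rw [← List.takeWhile_append_dropWhile (p := (· = true)) (l := w)]
    congr 1
    apply List.eq_replicate_of_mem
    intro b hb
    simpa using List.mem_takeWhile_imp hb
  set r := u.reverse.dropWhile (· = false) with hr
  have h2 : u.reverse = List.replicate (u.reverse.takeWhile (· = false)).length false ++ r := by
    conv_lhs => rw [← List.takeWhile_append_dropWhile (p := (· = false)) (l := u.reverse)]
    congr 1
    apply List.eq_replicate_of_mem
    intro b hb
    simpa using List.mem_takeWhile_imp hb
  have h3 : u = r.reverse ++ List.replicate (u.reverse.takeWhile (· = false)).length false := by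
    have := congrArg List.reverse h2
    simpa using this
  have hs : strip w = r.reverse := rfl
  rw [hs, h1, F_rep_true, h3, F_rep_false]

lemma F_pad (w : Word) : F (pad w) = F w := by
  rw [pad, F_cons_true, F_concat_false]

lemma Fz_swap (z : ℕ) (x y : Bool) : Fz z [y, x] ≤ Fz z [x, y] + 1 := by
  cases x <;> cases y <;> simp [Fz, stp] <;> omega

lemma ZC_pair (x y : Bool) : ZC [y, x] = ZC [x, y] := by
  cases x <;> cases y <;> simp [ZC, stp]

lemma F_swapPair_le (u : Word) (i : ℕ) (h : i + 1 < u.length) :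
    F (swapPair u i) ≤ F u + 1 := by
  have hi : i < u.length := by omega
  set x := u.getD i true with hx
  set y := u.getD (i+1) true with hy
  have hdrop : u.drop i = x :: y :: u.drop (i+2) := by
    rw [List.drop_eq_getElem_cons hi, List.drop_eq_getElem_cons h]
    rw [hx, hy, List.getD_eq_getElem u true hi, List.getD_eq_getElem u true h]
  have hlen : (u.take i).length = i := List.length_take_of_le (le_of_lt hi)
  have hu : u = u.take i ++ ([x, y] ++ u.drop (i+2)) := by
    conv_lhs => rw [← List.take_append_drop i u, hdrop]
    simp
  have hswap : swapPair u i = u.take i ++ ([y, x] ++ u.drop (i+2)) := by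
    rw [swapPair, setPair, ← hx, ← hy]
    conv_lhs => rw [hu]
    rw [List.set_append, if_neg (by omega), List.set_append, if_neg (by omega)]
    rw [hlen]
    simp
  have e : ∀ a b : Bool, F (u.take i ++ ([a, b] ++ u.drop (i+2)))
      = Fz 0 (u.take i) + Fz (0 + ZC (u.take i)) [a, b]
        + Fz (0 + ZC (u.take i) + ZC [a, b]) (u.drop (i+2)) := by
    intro a b
    rw [F_eq_Fz, Fz_append, Fz_append]; omega
  rw [hswap, e]
  conv_rhs => rw [hu, e]
  rw [ZC_pair]
  have := Fz_swap (0 + ZC (u.take i)) x y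
  omega

/-! ### `f1 = F` -/

lemma getD_concat_lt (v : Word) (x d : Bool) {b : ℕ} (hb : b < v.length) :
    (v ++ [x]).getD b d = v.getD b d := List.getD_append v [x] d b hb

lemma getD_concat_length (v : Word) (x d : Bool) :
    (v ++ [x]).getD v.length d = x := by
  rw [List.getD_eq_getElem _ _ (by simp)]
  exact List.getElem_concat_length (l := v) (a := x) (i := v.length) rfl _

lemma z0_concat (v : Word) (x : Bool) {c : ℕ} (hc : c ≤ v.length) :
    z0 (v ++ [x]) c = z0 v c := by
  unfold z0; congr 1
  apply Finset.filter_congr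
  intro a ha
  simp only [Finset.mem_range] at ha
  rw [getD_concat_lt v x true (by omega)]

lemma filter_concat_eq (v : Word) (x d t : Bool) :
    (Finset.range v.length).filter (fun b => (v ++ [x]).getD b d = t)
      = (Finset.range v.length).filter (fun b => v.getD b d = t) := by
  apply Finset.filter_congr
  intro b hb
  simp only [Finset.mem_range] at hb
  rw [getD_concat_lt v x d hb]

lemma z0_concat_succ (v : Word) (x : Bool) :
    z0 (v ++ [x]) (v.length + 1) = z0 v v.length + (if x then 0 else 1) := by
  unfold z0
  rw [Finset.range_add_one, Finset.filter_insert]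
  cases x
  · rw [if_pos (by rw [getD_concat_length]),
      Finset.card_insert_of_notMem (by simp), filter_concat_eq]
    simp [z0]
  · rw [if_neg (by rw [getD_concat_length]; simp), filter_concat_eq]
    simp [z0]

lemma ZC_concat (v : Word) (x : Bool) :
    ZC (v ++ [x]) = ZC v + (if x then 0 else 1) := by
  rw [ZC_append]
  cases x <;> rfl

lemma ZC_eq_z0 (v : Word) : ZC v = z0 v v.length := by
  induction v using List.reverseRecOn with
  | nil => rfl
  | append_singleton v x ih =>
    rw [ZC_concat, List.length_append, List.length_singleton, z0_concat_succ, ih]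

lemma f1_concat (v : Word) (x : Bool) :
    f1 (v ++ [x]) = f1 v + if x then z0 v v.length else 0 := by
  unfold f1
  rw [List.length_append, List.length_singleton, Finset.range_add_one, Finset.filter_insert]
  have hsum : ∑ b ∈ (Finset.range v.length).filter
        (fun b => (v ++ [x]).getD b false = true), z0 (v ++ [x]) b
      = ∑ b ∈ (Finset.range v.length).filter (fun b => v.getD b false = true), z0 v b := by
    refine Finset.sum_congr (filter_concat_eq v x false true) ?_
    intro b hb
    simp only [Finset.mem_filter, Finset.mem_range] at hb
    exact z0_concat v x (le_of_lt hb.1)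
  cases x
  · rw [if_neg (by rw [getD_concat_length]; simp), hsum]
    simp
  · rw [if_pos (by rw [getD_concat_length]), Finset.sum_insert (by simp),
      hsum, z0_concat v true (le_refl _)]
    simp only [if_pos]
    omega

lemma f1_eq_F (v : Word) : f1 v = F v := by
  induction v using List.reverseRecOn with
  | nil => rfl
  | append_singleton v x ih =>
    rw [f1_concat, F_append, ih]
    congr 1
    cases x
    · simp [Fz, stp]
    · have h1 : Fz (ZC v) [true] = 0 + ZC v := rfl
      rw [h1, ZC_eq_z0]
      simp

/-! ### `nb` versus `f1` -/

/-- the set of block starts -/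
noncomputable def BS (w : Word) : Finset ℕ :=
  (Finset.range w.length).filter
    (fun b => w.getD b false = true ∧ (b = 0 ∨ w.getD (b - 1) true = false))

lemma nb_eq_card (w : Word) : nb w = (BS w).card := rfl

lemma z0_succ (w : Word) (c : ℕ) :
    z0 w (c + 1) = z0 w c + (if w.getD c true = false then 1 else 0) := by
  unfold z0
  rw [Finset.range_add_one, Finset.filter_insert]
  split
  · rw [Finset.card_insert_of_notMem (by simp)]
  · simp

lemma blocks_le_z0_aux (w : Word) :
    ∀ c, c ≤ w.length → ((BS w).filter (· < c)).card
      ≤ z0 w c + (if c = 0 then 0 else if w.getD (c-1) true = false then 0 else 1) := by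
  intro c
  induction c with
  | zero => simp
  | succ c ih =>
    intro hc
    have hc' : c < w.length := by omega
    have hcard : ((BS w).filter (· < c + 1)).card
        = ((BS w).filter (· < c)).card + (if c ∈ BS w then 1 else 0) := by
      have hsplit : (BS w).filter (· < c + 1)
          = (BS w).filter (· < c) ∪ (BS w).filter (· = c) := by
        rw [← Finset.filter_or]
        apply Finset.filter_congr
        intro b _
        simp [Nat.lt_succ_iff_lt_or_eq]
        omega
      rw [hsplit, Finset.card_union_of_disjoint, Finset.filter_eq']
      · split <;> simp
      · simp only [Finset.disjoint_filter]
        intro b _ hb1 hb2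
        omega
    rw [hcard, z0_succ]
    have h1 : (if c + 1 = 0 then 0 else if w.getD (c+1-1) true = false then 0 else 1)
        = if w.getD c true = false then 0 else 1 := by simp
    rw [h1]
    by_cases hmem : c ∈ BS w
    · have hB : w.getD c false = true ∧ (c = 0 ∨ w.getD (c-1) true = false) := by
        have := hmem
        unfold BS at this
        simp only [Finset.mem_filter, Finset.mem_range] at this
        exact this.2
      have hδ : (if c = 0 then 0 else if w.getD (c-1) true = false then 0 else 1) = 0 := by
        rcases hB.2 with h | h
        · simp [h]
        · by_cases h0 : c = 0
          · simp [h0]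
          · rw [if_neg h0, if_pos h]
      have hibound := ih (by omega)
      rw [hδ] at hibound
      have hne : w.getD c true = false → False := by
        intro h
        have h2 : w.getD c true = w.getD c false := by
          rw [List.getD_eq_getElem _ _ hc', List.getD_eq_getElem _ _ hc']
        rw [h, hB.1] at h2
        exact Bool.false_ne_true h2
      rw [if_pos hmem]
      by_cases hcc : w.getD c true = false
      · exact absurd hcc hne
      · rw [if_neg hcc, if_neg hcc]
        omega
    · rw [if_neg hmem]
      have hibound := ih (by omega)
      have : (if c = 0 then 0 else if w.getD (c-1) true = false then 0 else 1) ≤ 1 := by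
        split
        · omega
        · split <;> omega
      by_cases hcc : w.getD c true = false
      · rw [if_pos hcc, if_pos hcc]; omega
      · rw [if_neg hcc, if_neg hcc]; omega

lemma blocks_le_z0 (w : Word) {b : ℕ} (hb : b ∈ BS w) :
    ((BS w).filter (· < b)).card ≤ z0 w b := by
  have hmem := hb
  unfold BS at hmem
  simp only [Finset.mem_filter, Finset.mem_range] at hmem
  have := blocks_le_z0_aux w b (le_of_lt hmem.1)
  have hδ : (if b = 0 then 0 else if w.getD (b-1) true = false then 0 else 1) = 0 := by
    rcases hmem.2.2 with h | h
    · simp [h]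
    · by_cases h0 : b = 0
      · simp [h0]
      · rw [if_neg h0, if_pos h]
  omega

lemma sum_lt_card (s : Finset ℕ) :
    2 * (∑ b ∈ s, (s.filter (· < b)).card) + s.card = s.card * s.card := by
  induction s using Finset.induction_on_max with
  | empty => simp
  | insert a s ha ih =>
    have hns : a ∉ s := fun h => lt_irrefl a (ha a h)
    rw [Finset.sum_insert hns, Finset.card_insert_of_notMem hns]
    have h1 : (insert a s).filter (· < a) = s := by
      rw [Finset.filter_insert, if_neg (lt_irrefl a)]
      apply Finset.filter_true_of_mem
      intro x hx
      exact ha x hx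
    have h2 : ∀ b ∈ s, (insert a s).filter (· < b) = s.filter (· < b) := by
      intro b hb
      rw [Finset.filter_insert, if_neg (by have := ha b hb; omega)]
    have h2' : ∀ b ∈ s, ((insert a s).filter (· < b)).card = (s.filter (· < b)).card :=
      fun b hb => by rw [h2 b hb]
    rw [h1, show (∑ x ∈ s, ((insert a s).filter (· < x)).card)
        = ∑ x ∈ s, (s.filter (· < x)).card from Finset.sum_congr rfl h2']
    zify at ih ⊢
    linear_combination ih

lemma nb_sq_le_f1 (w : Word) : nb w * nb w ≤ 2 * f1 w + nb w := by
  have hsub : BS w ⊆ (Finset.range w.length).filter (fun b => w.getD b false = true) := by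
    intro b hb
    unfold BS at hb
    simp only [Finset.mem_filter, Finset.mem_range] at *
    exact ⟨hb.1, hb.2.1⟩
  have h1 : ∑ b ∈ BS w, z0 w b ≤ f1 w :=
    Finset.sum_le_sum_of_subset hsub
  have h2 : ∑ b ∈ BS w, ((BS w).filter (· < b)).card ≤ ∑ b ∈ BS w, z0 w b :=
    Finset.sum_le_sum (fun b hb => blocks_le_z0 w hb)
  have h3 := sum_lt_card (BS w)
  rw [nb_eq_card]
  linarith

/-! ### Transition analysis -/

lemma unlike_lt {w : Word} {i : ℕ} (hi : i ∈ unlike w) : i + 1 < (pad w).length := by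
  unfold unlike at hi
  rw [List.mem_filter] at hi
  have := List.mem_range.mp hi.1
  simp only [pad, List.length_cons, List.length_append, List.length_singleton]
  omega

lemma f1_step {w : Word} {i : ℕ} (hi : i ∈ unlike w) :
    f1 (strip (swapPair (pad w) i)) ≤ f1 w + 1 := by
  rw [f1_eq_F, f1_eq_F, F_strip]
  calc F (swapPair (pad w) i) ≤ F (pad w) + 1 := F_swapPair_le _ _ (unlike_lt hi)
    _ = F w + 1 := by rw [F_pad]

lemma P_pos_cases {p : ℝ} {w w' : Word} (h : 0 < P 0 p w w') :
    w' = w ∨ ∃ i ∈ unlike w, w' = strip (swapPair (pad w) i) := by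
  by_contra hcon
  push_neg at hcon
  obtain ⟨h1, h2⟩ := hcon
  have hz : P 0 p w w' = 0 := by
    unfold P
    apply List.sum_eq_zero
    intro x hx
    rcases List.mem_map.mp hx with ⟨i, hi, rfl⟩
    simp only
    rw [if_neg (show ¬ strip (swapPair (pad w) i) = w' from fun e => h2 i hi e.symm),
      if_neg (show ¬ w = w' from fun e => h1 e.symm)]
    ring
  rw [hz] at h
  exact lt_irrefl 0 h

/-! ### Measure-theoretic part -/

def pathFn (t : ℕ) (w w' : Word) (v : Fin t → Word) : ℕ → Word :=
  fun i => if h : i < t then v ⟨i, h⟩ else if i = t then w else w'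

lemma pathFn_t (t : ℕ) (w w' : Word) (v : Fin t → Word) : pathFn t w w' v t = w := by
  simp [pathFn]

lemma pathFn_t1 (t : ℕ) (w w' : Word) (v : Fin t → Word) : pathFn t w w' v (t + 1) = w' := by
  rw [pathFn, dif_neg (by omega), if_neg (by omega)]

lemma cylinder_null {Ω : Type} [MeasurableSpace Ω] {μ : Measure Ω} {ξ : ℕ → Ω → Word}
    {β p : ℝ} (hchain : IsEVChain β p μ ξ) (t : ℕ) (w w' : Word)
    (h : ENNReal.ofReal (P β p w w') = 0) :
    μ {ω | ξ t ω = w ∧ ξ (t+1) ω = w'} = 0 := by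
  have hsub : {ω | ξ t ω = w ∧ ξ (t+1) ω = w'}
      ⊆ ⋃ v : Fin t → Word, {ω | ∀ i ≤ t + 1, ξ i ω = pathFn t w w' v i} := by
    intro ω hω
    refine Set.mem_iUnion.mpr ⟨fun i => ξ i ω, ?_⟩
    intro i hi
    by_cases h1 : i < t
    · simp [pathFn, h1]
    · by_cases h2 : i = t
      · subst h2
        rw [pathFn_t]; exact hω.1
      · have h3 : i = t + 1 := by omega
        subst h3
        rw [pathFn_t1]; exact hω.2
  refine measure_mono_null hsub (measure_iUnion_null fun v => ?_)
  have hstep := hchain.2 t (pathFn t w w' v)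
  rw [pathFn_t, pathFn_t1] at hstep
  rw [hstep, h, mul_zero]

lemma ae_P_pos {Ω : Type} [MeasurableSpace Ω] {μ : Measure Ω} {ξ : ℕ → Ω → Word}
    {β p : ℝ} (hchain : IsEVChain β p μ ξ) :
    ∀ᵐ ω ∂μ, ∀ t : ℕ, 0 < P β p (ξ t ω) (ξ (t+1) ω) := by
  rw [MeasureTheory.ae_iff]
  have hsub : {ω | ¬ ∀ t : ℕ, 0 < P β p (ξ t ω) (ξ (t+1) ω)}
      ⊆ ⋃ (tq : ℕ × Word × Word) (_ : ENNReal.ofReal (P β p tq.2.1 tq.2.2) = 0),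
          {ω | ξ tq.1 ω = tq.2.1 ∧ ξ (tq.1 + 1) ω = tq.2.2} := by
    intro ω hω
    simp only [Set.mem_setOf_eq, not_forall, not_lt] at hω
    obtain ⟨t, ht⟩ := hω
    refine Set.mem_iUnion.mpr ⟨(t, ξ t ω, ξ (t+1) ω), ?_⟩
    refine Set.mem_iUnion.mpr ⟨ENNReal.ofReal_eq_zero.mpr ht, ?_⟩
    exact ⟨rfl, rfl⟩
  refine measure_mono_null hsub (measure_iUnion_null fun tq => measure_iUnion_null fun h0 =>
    cylinder_null hchain tq.1 tq.2.1 tq.2.2 h0)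

/-! ### Real arithmetic -/

lemma real_bound (n f t : ℝ) (hn : 0 ≤ n) (hf : 0 ≤ f) (ht : 1 ≤ t)
    (h : n * n ≤ 2 * (f * t) + n) : n ≤ (1 + Real.sqrt (2 * f)) * Real.sqrt t := by
  have hst : 1 ≤ Real.sqrt t := by
    rw [show (1:ℝ) = Real.sqrt 1 from Real.sqrt_one.symm]
    exact Real.sqrt_le_sqrt ht
  have ht0 : (0:ℝ) ≤ t := by linarith
  have hsq := Real.sqrt_nonneg (2 * f)
  by_cases hn1 : n ≤ 1
  · nlinarith
  · push_neg at hn1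
    have key : (n - 1)^2 ≤ 2 * f * t := by nlinarith
    have h2 : n - 1 ≤ Real.sqrt (2 * f * t) := by
      rw [← Real.sqrt_sq (by linarith : (0:ℝ) ≤ n - 1)]
      exact Real.sqrt_le_sqrt key
    have h3 : Real.sqrt (2 * f * t) = Real.sqrt (2 * f) * Real.sqrt t :=
      Real.sqrt_mul (by linarith) t
    nlinarith

/-- Theorem 8(i): for pure exclusion (`β = 0`) there is a constant `C ∈ (0,∞)`,
depending only on the initial configuration, such that for every `p ∈ [0,1]`, a.s.,
for all `t ∈ ℕ`, `max_{0≤s≤t} N(ξ_s) ≤ C t^{1/2}`. -/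
theorem numBlocks_max_le_const_sqrt
    (S₀ : Word) (hS₀ : IsConfig S₀) :
    ∃ C : ℝ, 0 < C ∧
      ∀ p : ℝ, 0 ≤ p → p ≤ 1 →
        ∀ (Ω : Type) (_ : MeasurableSpace Ω) (μ : Measure Ω),
          IsProbabilityMeasure μ →
          ∀ ξ : ℕ → Ω → Word, IsEVChain 0 p μ ξ → (∀ᵐ ω ∂μ, ξ 0 ω = S₀) →
            ∀ᵐ ω ∂μ, ∀ t : ℕ, 0 < t → ∀ s ≤ t,
              (nb (ξ s ω) : ℝ) ≤ C * (t : ℝ) ^ ((1 : ℝ) / 2) := by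
  refine ⟨1 + Real.sqrt (2 * ((f1 S₀ : ℝ) + 1)), by positivity, ?_⟩
  intro p hp0 hp1 Ω mΩ μ hμ ξ hchain hinit
  filter_upwards [ae_P_pos hchain, hinit] with ω hP h0
  intro t ht s hst
  have hf : ∀ s : ℕ, f1 (ξ s ω) ≤ f1 S₀ + s := by
    intro s
    induction s with
    | zero => rw [h0]; omega
    | succ s ih =>
      rcases P_pos_cases (hP s) with he | ⟨i, hi, he⟩
      · rw [he]; omega
      · have hstep := f1_step (w := ξ s ω) hi
        rw [he]
        omega
  have hnat : f1 (ξ s ω) ≤ (f1 S₀ + 1) * t := by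
    have hs1 := hf s
    have h1 : f1 S₀ ≤ f1 S₀ * t := Nat.le_mul_of_pos_right _ ht
    have h2 : (f1 S₀ + 1) * t = f1 S₀ * t + t := by ring
    omega
  have hsq := nb_sq_le_f1 (ξ s ω)
  have hcast : (nb (ξ s ω) : ℝ) * (nb (ξ s ω) : ℝ)
      ≤ 2 * (((f1 S₀ : ℝ) + 1) * (t : ℝ)) + (nb (ξ s ω) : ℝ) := by
    have hchain2 : nb (ξ s ω) * nb (ξ s ω) ≤ 2 * ((f1 S₀ + 1) * t) + nb (ξ s ω) := by
      calc nb (ξ s ω) * nb (ξ s ω) ≤ 2 * f1 (ξ s ω) + nb (ξ s ω) := hsq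
        _ ≤ 2 * ((f1 S₀ + 1) * t) + nb (ξ s ω) := by omega
    exact_mod_cast hchain2
  have hb := real_bound (nb (ξ s ω) : ℝ) ((f1 S₀ : ℝ) + 1) (t : ℝ)
    (by positivity) (by positivity) (by exact_mod_cast ht) hcast
  rw [show ((t : ℝ) ^ ((1 : ℝ) / 2)) = Real.sqrt (t : ℝ) from (Real.sqrt_eq_rpow _).symm]
  exact hb

end EV
end

section
/- For every configuration S ∈ 𝒟, the following inequalities hold: (1/2)|S| ≤ f₁(S) ≤ (1/4)|S|², (1/4)|S|² ≤ f₂(S) ≤ (1/8)|S|³, and f₂(S) ≤ |S| f₁(S) ≤ 2 (f₁(S))². -/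
open MeasureTheory Filter
open scoped ENNReal NNReal

namespace EV

private lemma getD_false_iff (S : Word) {i : ℕ} (h : i < S.length) :
    S.getD i true = false ↔ ¬ S.getD i false = true := by
  rw [List.getD_eq_getElem S true h, List.getD_eq_getElem S false h]
  cases S[i] <;> simp

private lemma head_getD (l : List Bool) (h : l.head? = some false) :
    l.getD 0 true = false := by
  cases l with
  | nil => simp at h
  | cons a t => simp at h; simpa [List.getD] using h

private lemma last_getD (l : List Bool) (h : l.getLast? = some true) :
    l.getD (l.length - 1) false = true := by
  have hne : l ≠ [] := by rintro rfl; simp at h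
  rw [List.getLast?_eq_getLast hne] at h
  rw [List.getD_eq_getElem l false (by simpa using Nat.sub_lt (List.length_pos_iff.2 hne) one_pos),
    ← List.getLast_eq_getElem hne]
  simpa using h

private lemma f1_eq_sum_o1 (S : Word) :
    f1 S = ∑ a ∈ (Finset.range S.length).filter (fun a => S.getD a true = false),
      o1 S (a + 1) := by
  classical
  have hL : f1 S = ∑ b ∈ Finset.Ico 0 S.length, ∑ a ∈ Finset.Ico 0 b,
      (if S.getD a true = false then (if S.getD b false = true then (1:ℕ) else 0) else 0) := by
    rw [show f1 S = ∑ b ∈ (Finset.range S.length).filter (fun b => S.getD b false = true),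
        z0 S b from rfl, Finset.sum_filter, ← Nat.Ico_zero_eq_range]
    refine Finset.sum_congr rfl fun b _ => ?_
    by_cases hb : S.getD b false = true
    · simp only [if_pos hb]
      rw [show z0 S b = ((Finset.range b).filter (fun a => S.getD a true = false)).card from rfl,
        Finset.card_filter, ← Nat.Ico_zero_eq_range]
    · simp only [if_neg hb, ite_self, Finset.sum_const_zero]
  have hR : (∑ a ∈ (Finset.range S.length).filter (fun a => S.getD a true = false),
        o1 S (a + 1))
      = ∑ a ∈ Finset.Ico 0 S.length, ∑ b ∈ Finset.Ico (a + 1) S.length,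
      (if S.getD a true = false then (if S.getD b false = true then (1:ℕ) else 0) else 0) := by
    rw [Finset.sum_filter, ← Nat.Ico_zero_eq_range]
    refine Finset.sum_congr rfl fun a _ => ?_
    by_cases ha : S.getD a true = false
    · simp only [if_pos ha]
      rw [show o1 S (a + 1) = ((Finset.Ico (a + 1) S.length).filter
          (fun b => S.getD b false = true)).card from rfl, Finset.card_filter]
    · simp only [if_neg ha, Finset.sum_const_zero]
  rw [hL, hR, Finset.sum_Ico_Ico_comm']

private lemma key (S : Word) (hhead : S.head? = some false) (hlast : S.getLast? = some true) :
    ∃ Z O : ℕ, O + Z = S.length ∧ 1 ≤ O ∧ 1 ≤ Z ∧ 2 ≤ S.length ∧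
      S.length ≤ f1 S + 1 ∧ f1 S ≤ O * Z ∧
      ((Z : ℝ)) ^ 2 + ((O : ℝ)) ^ 2 ≤ 2 * f2 S ∧
      2 * f2 S ≤ ((Z : ℝ) + (O : ℝ)) * (f1 S : ℝ) := by
  classical
  have hne : S ≠ [] := by rintro rfl; simp at hhead
  have hpos : 0 < S.length := List.length_pos_iff.2 hne
  have h0 : S.getD 0 true = false := head_getD S hhead
  have hl : S.getD (S.length - 1) false = true := last_getD S hlast
  have hn2 : 2 ≤ S.length := by
    by_contra hcon
    have h1 : S.length - 1 = 0 := by omega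
    have hl' := hl
    rw [h1] at hl'
    have h0' := h0
    rw [getD_false_iff S hpos] at h0'
    exact h0' hl'
  set F1 := (Finset.range S.length).filter (fun b => S.getD b false = true) with hF1
  set F0 := (Finset.range S.length).filter (fun a => S.getD a true = false) with hF0
  set O := F1.card with hO
  set Z := F0.card with hZ
  have hZO : O + Z = S.length := by
    have hcg : F0 = (Finset.range S.length).filter (fun a => ¬ S.getD a false = true) := by
      rw [hF0]
      exact Finset.filter_congr (fun a ha => getD_false_iff S (Finset.mem_range.1 ha))
    rw [hO, hZ, hcg, hF1, Finset.card_filter_add_card_filter_not, Finset.card_range]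
  have hmem1 : S.length - 1 ∈ F1 :=
    Finset.mem_filter.2 ⟨Finset.mem_range.2 (by omega), hl⟩
  have hmem0 : 0 ∈ F0 := Finset.mem_filter.2 ⟨Finset.mem_range.2 hpos, h0⟩
  have hO1 : 1 ≤ O := Finset.card_pos.2 ⟨_, hmem1⟩
  have hZ1 : 1 ≤ Z := Finset.card_pos.2 ⟨_, hmem0⟩
  have hz0_le : ∀ b ∈ F1, z0 S b ≤ Z := by
    intro b hb
    have hbn : b ≤ S.length := le_of_lt (Finset.mem_range.1 (Finset.mem_filter.1 hb).1)
    rw [hZ, hF0]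
    exact Finset.card_le_card
      (Finset.filter_subset_filter _ (Finset.range_subset_range.2 hbn))
  have hz0_ge : ∀ b ∈ F1, 1 ≤ z0 S b := by
    intro b hb
    have hb1 : b ≠ 0 := by
      intro hb0
      have hmem := (Finset.mem_filter.1 hb).2
      rw [hb0] at hmem
      have h0' := h0
      rw [getD_false_iff S hpos] at h0'
      exact h0' hmem
    exact Finset.card_pos.2
      ⟨0, Finset.mem_filter.2 ⟨Finset.mem_range.2 (Nat.pos_of_ne_zero hb1), h0⟩⟩
  have hz0_last : z0 S (S.length - 1) = Z := by
    have hnot : ¬ S.getD (S.length - 1) true = false := by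
      rw [getD_false_iff S (by omega)]
      exact not_not_intro hl
    rw [hZ, hF0]
    show ((Finset.range (S.length - 1)).filter (fun a => S.getD a true = false)).card = _
    conv_rhs => rw [show S.length = (S.length - 1) + 1 by omega, Finset.range_add_one]
    rw [Finset.filter_insert, if_neg hnot]
  have ho1_first : o1 S 1 = O := by
    have hnot : ¬ S.getD 0 false = true := (getD_false_iff S hpos).1 h0
    have hset : (Finset.range S.length).filter (fun b => S.getD b false = true)
        = (Finset.Ico 1 S.length).filter (fun b => S.getD b false = true) := by
      rw [← Nat.Ico_zero_eq_range, ← Finset.insert_Ico_add_one_left_eq_Ico hpos, Finset.filter_insert,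
        if_neg hnot, zero_add]
    rw [hO, hF1, hset]
    rfl
  have ho1_le : ∀ a ∈ F0, o1 S (a + 1) ≤ O := by
    intro a _
    rw [hO, hF1]
    refine Finset.card_le_card (Finset.filter_subset_filter _ ?_)
    intro x hx
    rw [Finset.mem_Ico] at hx
    exact Finset.mem_range.2 hx.2
  have hid : f1 S = ∑ a ∈ F0, o1 S (a + 1) := f1_eq_sum_o1 S
  have hf1_low : S.length ≤ f1 S + 1 := by
    have h1 : f1 S = z0 S (S.length - 1) + ∑ b ∈ F1.erase (S.length - 1), z0 S b :=
      (Finset.add_sum_erase F1 (z0 S) hmem1).symm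
    have h2 : (F1.erase (S.length - 1)).card * 1 ≤ ∑ b ∈ F1.erase (S.length - 1), z0 S b := by
      simpa using Finset.card_nsmul_le_sum _ _ 1
        (fun b hb => hz0_ge b (Finset.mem_of_mem_erase hb))
    have h3 : (F1.erase (S.length - 1)).card = O - 1 := by
      rw [Finset.card_erase_of_mem hmem1, hO]
    rw [hz0_last] at h1
    omega
  have hf1_up : f1 S ≤ O * Z := by
    calc f1 S = ∑ b ∈ F1, z0 S b := rfl
    _ ≤ F1.card * Z := by simpa using Finset.sum_le_card_nsmul F1 (z0 S) Z hz0_le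
    _ = O * Z := by rw [hO]
  have hf1cast : (f1 S : ℝ) = ∑ b ∈ F1, (z0 S b : ℝ) := by
    rw [show f1 S = ∑ b ∈ F1, z0 S b from rfl]
    exact Nat.cast_sum _ _
  have hf1cast' : (f1 S : ℝ) = ∑ a ∈ F0, (o1 S (a + 1) : ℝ) := by
    rw [hid]; exact Nat.cast_sum _ _
  have hf2 : f2 S = (1 / 2) * ((∑ b ∈ F1, ((z0 S b : ℝ)) ^ 2)
      + (∑ a ∈ F0, ((o1 S (a + 1) : ℝ)) ^ 2)) := rfl
  have hA_le : (∑ b ∈ F1, ((z0 S b : ℝ)) ^ 2) ≤ (Z : ℝ) * (f1 S : ℝ) := by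
    rw [hf1cast, Finset.mul_sum]
    refine Finset.sum_le_sum fun b hb => ?_
    have h := (Nat.cast_le (α := ℝ)).2 (hz0_le b hb)
    have h0' : (0 : ℝ) ≤ (z0 S b : ℝ) := Nat.cast_nonneg _
    nlinarith
  have hB_le : (∑ a ∈ F0, ((o1 S (a + 1) : ℝ)) ^ 2) ≤ (O : ℝ) * (f1 S : ℝ) := by
    rw [hf1cast', Finset.mul_sum]
    refine Finset.sum_le_sum fun a ha => ?_
    have h := (Nat.cast_le (α := ℝ)).2 (ho1_le a ha)
    have h0' : (0 : ℝ) ≤ (o1 S (a + 1) : ℝ) := Nat.cast_nonneg _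
    nlinarith
  have hA_ge : ((Z : ℝ)) ^ 2 ≤ ∑ b ∈ F1, ((z0 S b : ℝ)) ^ 2 := by
    have h := Finset.single_le_sum (f := fun b => ((z0 S b : ℝ)) ^ 2)
      (fun i _ => sq_nonneg _) hmem1
    simpa [hz0_last] using h
  have hB_ge : ((O : ℝ)) ^ 2 ≤ ∑ a ∈ F0, ((o1 S (a + 1) : ℝ)) ^ 2 := by
    have h := Finset.single_le_sum (f := fun a => ((o1 S (a + 1) : ℝ)) ^ 2)
      (fun i _ => sq_nonneg _) hmem0
    simpa [ho1_first] using h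
  refine ⟨Z, O, hZO, hO1, hZ1, hn2, hf1_low, hf1_up, ?_, ?_⟩
  · rw [hf2]; linarith [hA_ge, hB_ge]
  · have hring : ((Z : ℝ) + (O : ℝ)) * (f1 S : ℝ)
        = (Z : ℝ) * (f1 S : ℝ) + (O : ℝ) * (f1 S : ℝ) := by ring
    rw [hf2]; linarith [hA_le, hB_le, hring]

private lemma arith (L a b zr orr : ℝ) (c1 : orr + zr = L) (c2 : L ≤ a + 1)
    (c3 : a ≤ orr * zr) (c4 : 1 ≤ orr) (c5 : 1 ≤ zr) (c6 : 2 ≤ L)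
    (e7 : zr ^ 2 + orr ^ 2 ≤ 2 * b) (e8 : 2 * b ≤ (zr + orr) * a) :
    ((1 / 2 : ℝ) * L ≤ a ∧ a ≤ (1 / 4 : ℝ) * L ^ 2) ∧
    ((1 / 4 : ℝ) * L ^ 2 ≤ b ∧ b ≤ (1 / 8 : ℝ) * L ^ 3) ∧
    (b ≤ L * a ∧ L * a ≤ 2 * a ^ 2) := by
  have hL0 : (0 : ℝ) ≤ L := by linarith
  have ha0 : (0 : ℝ) ≤ a := by linarith
  have ha2 : a ≤ (1 / 4 : ℝ) * L ^ 2 := by nlinarith [sq_nonneg (orr - zr)]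
  have e8' : 2 * b ≤ L * a := by
    calc 2 * b ≤ (zr + orr) * a := e8
    _ = L * a := by rw [show zr + orr = L by linarith]
  have hLa : (0 : ℝ) ≤ L * a := mul_nonneg hL0 ha0
  refine ⟨⟨by linarith, ha2⟩, ⟨?_, ?_⟩, ?_, ?_⟩
  · nlinarith [sq_nonneg (zr - orr)]
  · nlinarith [mul_le_mul_of_nonneg_left ha2 hL0]
  · linarith
  · nlinarith [mul_nonneg (show (0:ℝ) ≤ 2 * a - L by linarith) ha0]

/-- Basic inequalities between `|S|`, `f₁` and `f₂`:
`(1/2)|S| ≤ f₁(S) ≤ (1/4)|S|²`, `(1/4)|S|² ≤ f₂(S) ≤ (1/8)|S|³`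
and `f₂(S) ≤ |S| f₁(S) ≤ 2 f₁(S)²` for every `S ∈ 𝒟`. -/
theorem f1_f2_inequalities (S : Word) (hS : IsConfig S) :
    ((1 / 2 : ℝ) * (hz S : ℝ) ≤ (f1 S : ℝ) ∧ (f1 S : ℝ) ≤ (1 / 4 : ℝ) * (hz S : ℝ) ^ 2) ∧
    ((1 / 4 : ℝ) * (hz S : ℝ) ^ 2 ≤ f2 S ∧ f2 S ≤ (1 / 8 : ℝ) * (hz S : ℝ) ^ 3) ∧
    (f2 S ≤ (hz S : ℝ) * (f1 S : ℝ) ∧ (hz S : ℝ) * (f1 S : ℝ) ≤ 2 * (f1 S : ℝ) ^ 2) := by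
  classical
  rcases hS with rfl | ⟨hhead, hlast⟩
  · norm_num [hz, f1, f2]
  obtain ⟨Z, O, hZO, hO1, hZ1, hn2, hlow, hup, h7, h8⟩ := key S hhead hlast
  simp only [hz]
  have c1 : (O : ℝ) + (Z : ℝ) = (S.length : ℝ) := by exact_mod_cast hZO
  have c2 : (S.length : ℝ) ≤ (f1 S : ℝ) + 1 := by exact_mod_cast hlow
  have c3 : (f1 S : ℝ) ≤ (O : ℝ) * (Z : ℝ) := by exact_mod_cast hup
  have c4 : (1 : ℝ) ≤ (O : ℝ) := by exact_mod_cast hO1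
  have c5 : (1 : ℝ) ≤ (Z : ℝ) := by exact_mod_cast hZ1
  have c6 : (2 : ℝ) ≤ (S.length : ℝ) := by exact_mod_cast hn2
  exact arith (S.length : ℝ) (f1 S : ℝ) (f2 S) (Z : ℝ) (O : ℝ) c1 c2 c3 c4 c5 c6 h7 h8

end EV
end

section
/- Let N ∈ ℕ and let n₁, n₂, …, n_N be nonnegative real numbers. If, for some A, B > 0, Σ_{i=1}^N n_i² ≤ A and Σ_{i=1}^N i·n_i ≤ B, then Σ_{i=1}^N n_i ≤ (6AB)^{1/3}. -/
open MeasureTheory Filter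
open scoped ENNReal NNReal

namespace EV

lemma aux_sum_sq (n : ℕ → ℝ) : ∀ N : ℕ,
    (∑ i ∈ Finset.Icc 1 N, n i) ^ 2 + ∑ i ∈ Finset.Icc 1 N, n i ^ 2
      = 2 * ∑ j ∈ Finset.Icc 1 N, n j * ∑ i ∈ Finset.Icc 1 j, n i := by
  intro N
  induction N with
  | zero => simp
  | succ N ih =>
    rw [Finset.sum_Icc_succ_top (by omega), Finset.sum_Icc_succ_top (by omega),
      Finset.sum_Icc_succ_top (by omega), Finset.sum_Icc_succ_top (by omega)]
    ring_nf
    ring_nf at ih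
    linarith

/-- Lemma 14 (elementary inequality): if `n₁,…,n_N ≥ 0`, `Σ nᵢ² ≤ A` and `Σ i·nᵢ ≤ B`
for some `A, B > 0`, then `Σ nᵢ ≤ (6AB)^{1/3}`. -/
theorem sum_le_cube_root_of_sq_sum_and_weighted_sum
    (N : ℕ) (hN : 0 < N) (n : ℕ → ℝ) (hn : ∀ i ∈ Finset.Icc 1 N, 0 ≤ n i)
    (A B : ℝ) (hA : 0 < A) (hB : 0 < B)
    (h1 : ∑ i ∈ Finset.Icc 1 N, n i ^ 2 ≤ A)
    (h2 : ∑ i ∈ Finset.Icc 1 N, (i : ℝ) * n i ≤ B) :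
    ∑ i ∈ Finset.Icc 1 N, n i ≤ (6 * A * B) ^ ((1 : ℝ) / 3) := by
  set S := ∑ i ∈ Finset.Icc 1 N, n i with hSdef
  have hS0 : 0 ≤ S := Finset.sum_nonneg hn
  -- partial sums are bounded by √(jA)
  have hP : ∀ j ∈ Finset.Icc 1 N, (∑ i ∈ Finset.Icc 1 j, n i) ≤ Real.sqrt ((j : ℝ) * A) := by
    intro j hj
    have hsub : Finset.Icc 1 j ⊆ Finset.Icc 1 N :=
      Finset.Icc_subset_Icc_right (Finset.mem_Icc.mp hj).2
    have hQ : ∑ i ∈ Finset.Icc 1 j, n i ^ 2 ≤ A :=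
      le_trans (Finset.sum_le_sum_of_subset_of_nonneg hsub (fun i _ _ => sq_nonneg _)) h1
    have hcs : (∑ i ∈ Finset.Icc 1 j, n i) ^ 2 ≤ (j : ℝ) * A := by
      have h := sq_sum_le_card_mul_sum_sq (s := Finset.Icc 1 j) (f := n)
      rw [Nat.card_Icc] at h
      have hcard : ((j + 1 - 1 : ℕ) : ℝ) = (j : ℝ) := by norm_num
      rw [hcard] at h
      calc (∑ i ∈ Finset.Icc 1 j, n i) ^ 2 ≤ (j : ℝ) * ∑ i ∈ Finset.Icc 1 j, n i ^ 2 := h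
        _ ≤ (j : ℝ) * A := by
            apply mul_le_mul_of_nonneg_left hQ (by positivity)
    have h0 : 0 ≤ ∑ i ∈ Finset.Icc 1 j, n i :=
      Finset.sum_nonneg (fun i hi => hn i (hsub hi))
    calc ∑ i ∈ Finset.Icc 1 j, n i = Real.sqrt ((∑ i ∈ Finset.Icc 1 j, n i) ^ 2) :=
          (Real.sqrt_sq h0).symm
      _ ≤ Real.sqrt ((j : ℝ) * A) := Real.sqrt_le_sqrt hcs
  -- Abel-type identity: S² ≤ 2 Σ nⱼ Pⱼ
  have hAbel : S ^ 2 ≤ 2 * ∑ j ∈ Finset.Icc 1 N, n j * ∑ i ∈ Finset.Icc 1 j, n i := by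
    have := aux_sum_sq n N
    have hQ0 : 0 ≤ ∑ i ∈ Finset.Icc 1 N, n i ^ 2 :=
      Finset.sum_nonneg (fun i _ => sq_nonneg _)
    linarith
  -- bound the inner sums
  have hstep : S ^ 2 ≤ 2 * Real.sqrt A * ∑ j ∈ Finset.Icc 1 N, Real.sqrt (j : ℝ) * n j := by
    have h1' : ∑ j ∈ Finset.Icc 1 N, n j * ∑ i ∈ Finset.Icc 1 j, n i
        ≤ ∑ j ∈ Finset.Icc 1 N, n j * Real.sqrt ((j : ℝ) * A) := by
      apply Finset.sum_le_sum
      intro j hj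
      exact mul_le_mul_of_nonneg_left (hP j hj) (hn j hj)
    have h2' : ∀ j : ℕ, n j * Real.sqrt ((j : ℝ) * A)
        = Real.sqrt A * (Real.sqrt (j : ℝ) * n j) := by
      intro j
      rw [Real.sqrt_mul (by positivity)]
      ring
    calc S ^ 2 ≤ 2 * ∑ j ∈ Finset.Icc 1 N, n j * ∑ i ∈ Finset.Icc 1 j, n i := hAbel
      _ ≤ 2 * ∑ j ∈ Finset.Icc 1 N, n j * Real.sqrt ((j : ℝ) * A) := by linarith
      _ = 2 * Real.sqrt A * ∑ j ∈ Finset.Icc 1 N, Real.sqrt (j : ℝ) * n j := by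
          rw [mul_assoc]
          congr 1
          rw [Finset.mul_sum]
          exact Finset.sum_congr rfl (fun j _ => h2' j)
  -- Cauchy–Schwarz on the weighted sum
  have hCS : (∑ j ∈ Finset.Icc 1 N, Real.sqrt (j : ℝ) * n j) ^ 2 ≤ B * S := by
    have h := Finset.sum_mul_sq_le_sq_mul_sq (Finset.Icc 1 N)
      (fun j => Real.sqrt ((j : ℝ) * n j)) (fun j => Real.sqrt (n j))
    have heq : ∀ j ∈ Finset.Icc 1 N,
        Real.sqrt ((j : ℝ) * n j) * Real.sqrt (n j) = Real.sqrt (j : ℝ) * n j := by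
      intro j hj
      rw [Real.sqrt_mul (by positivity), mul_assoc, Real.mul_self_sqrt (hn j hj)]
    have heq2 : ∀ j ∈ Finset.Icc 1 N, Real.sqrt ((j : ℝ) * n j) ^ 2 = (j : ℝ) * n j := by
      intro j hj
      exact Real.sq_sqrt (mul_nonneg (by positivity) (hn j hj))
    have heq3 : ∀ j ∈ Finset.Icc 1 N, Real.sqrt (n j) ^ 2 = n j := by
      intro j hj
      exact Real.sq_sqrt (hn j hj)
    rw [Finset.sum_congr rfl heq, Finset.sum_congr rfl heq2, Finset.sum_congr rfl heq3] at h
    calc (∑ j ∈ Finset.Icc 1 N, Real.sqrt (j : ℝ) * n j) ^ 2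
        ≤ (∑ j ∈ Finset.Icc 1 N, (j : ℝ) * n j) * S := h
      _ ≤ B * S := by
          apply mul_le_mul_of_nonneg_right h2 hS0
  -- combine: S² ≤ 2√A·√(BS)
  have hW0 : 0 ≤ ∑ j ∈ Finset.Icc 1 N, Real.sqrt (j : ℝ) * n j :=
    Finset.sum_nonneg (fun j hj => mul_nonneg (Real.sqrt_nonneg _) (hn j hj))
  have hWle : ∑ j ∈ Finset.Icc 1 N, Real.sqrt (j : ℝ) * n j ≤ Real.sqrt (B * S) := by
    calc ∑ j ∈ Finset.Icc 1 N, Real.sqrt (j : ℝ) * n j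
        = Real.sqrt ((∑ j ∈ Finset.Icc 1 N, Real.sqrt (j : ℝ) * n j) ^ 2) :=
          (Real.sqrt_sq hW0).symm
      _ ≤ Real.sqrt (B * S) := Real.sqrt_le_sqrt hCS
  have hfin : S ^ 2 ≤ 2 * Real.sqrt A * Real.sqrt (B * S) := by
    have hA0 : (0 : ℝ) ≤ Real.sqrt A := Real.sqrt_nonneg _
    calc S ^ 2 ≤ 2 * Real.sqrt A * ∑ j ∈ Finset.Icc 1 N, Real.sqrt (j : ℝ) * n j := hstep
      _ ≤ 2 * Real.sqrt A * Real.sqrt (B * S) := by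
          apply mul_le_mul_of_nonneg_left hWle (by positivity)
  -- square both sides: S⁴ ≤ 4·A·(B·S)
  have hquart : S ^ 4 ≤ 4 * A * (B * S) := by
    have hrhs0 : 0 ≤ 2 * Real.sqrt A * Real.sqrt (B * S) := by positivity
    have := mul_self_le_mul_self (sq_nonneg S) hfin
    have hAe : Real.sqrt A * Real.sqrt A = A := Real.mul_self_sqrt hA.le
    have hBe : Real.sqrt (B * S) * Real.sqrt (B * S) = B * S :=
      Real.mul_self_sqrt (mul_nonneg hB.le hS0)
    nlinarith [this]
  have hcube : S ^ 3 ≤ 6 * A * B := by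
    rcases eq_or_lt_of_le hS0 with h | h
    · rw [← h]
      have := mul_pos hA hB
      nlinarith
    · nlinarith [mul_pos hA hB]
  -- finish via rpow
  have h6 : (0 : ℝ) ≤ 6 * A * B := by positivity
  calc S = (S ^ (3 : ℕ)) ^ ((1 : ℝ) / 3) := by
        rw [← Real.rpow_natCast S 3, ← Real.rpow_mul hS0]
        norm_num
    _ ≤ (6 * A * B) ^ ((1 : ℝ) / 3) :=
        Real.rpow_le_rpow (by positivity) hcube (by norm_num)

end EV
end
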